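/- Let F be a Frankenstein graph with partition {G1,...,Gm}. Then the auxiliary bipartite incidence graph G(F), whose vertex classes are the parts Gi and the vertices shared by at least two parts, with Gi adjacent to a shared vertex v if v ∈ V(Gi), is acyclic (a forest). -/

import Mathlib

/-! Colored graphs encoded as finite sets of (vertex pair, color) entries. -/

variable {V K : Type*} [DecidableEq V] [DecidableEq K]

/-- Uncolored edges of a colored graph. -/
def uedges (G : Finset (Sym2 V × K)) : Set (Sym2 V) := {e | ∃ c, (e, c) ∈ G}

/-- The underlying simple graph of a colored graph. -/
def graphOf (G : Finset (Sym2 V × K)) : SimpleGraph V :=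
  SimpleGraph.fromEdgeSet (uedges G)

/-- Vertex set of a colored graph. -/
def vertSet (G : Finset (Sym2 V × K)) : Set V := {v | ∃ p ∈ G, v ∈ p.1}

/-- Color set of a colored graph. -/
def colorSet (G : Finset (Sym2 V × K)) : Set K := {c | ∃ e, (e, c) ∈ G}

/-- A colored graph is simple: no loops, and no two edges on the same vertex pair. -/
def Simple (G : Finset (Sym2 V × K)) : Prop :=
  (∀ p ∈ G, ¬ p.1.IsDiag) ∧ ∀ p ∈ G, ∀ q ∈ G, p.1 = q.1 → p = q

/-- A colored graph is rainbow: all edges have pairwise distinct colors. -/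
def Rainbow (G : Finset (Sym2 V × K)) : Prop :=
  ∀ p ∈ G, ∀ q ∈ G, p.2 = q.2 → p = q

/-- The (uncolored) edges of `G` form a cycle. -/
def IsCycleSet (G : Finset (Sym2 V × K)) : Prop :=
  ∃ (u : V) (W : (graphOf G).Walk u u), W.IsCycle ∧ ∀ e, e ∈ uedges G ↔ e ∈ W.edges

/-- The (uncolored) edges of `G` form a path with terminals `s` and `t`. -/
def IsPathSet (G : Finset (Sym2 V × K)) (s t : V) : Prop :=
  ∃ W : (graphOf G).Walk s t, W.IsPath ∧ ∀ e, e ∈ uedges G ↔ e ∈ W.edges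

/-- A bad piece: an almost rainbow theta graph made of three rainbow paths sharing
their two terminals, with at least 6 vertices. -/
def IsBadPiece (G : Finset (Sym2 V × K)) : Prop :=
  Simple G ∧ (colorSet G).ncard = G.card - 1 ∧ 6 ≤ (vertSet G).ncard ∧
  ∃ s t : V, s ≠ t ∧ ∃ P : Fin 3 → Finset (Sym2 V × K),
    G = P 0 ∪ P 1 ∪ P 2 ∧
    (∀ i, IsPathSet (P i) s t ∧ Rainbow (P i)) ∧
    (∀ i j, i ≠ j → vertSet (P i) ∩ vertSet (P j) = {s, t}) ∧
    (∀ i j, i ≠ j → uedges (P i) ∩ uedges (P j) = ∅)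

/-- `G` contains a rainbow even cycle subgraph. -/
def ContainsRainbowEvenCycle (G : Finset (Sym2 V × K)) : Prop :=
  ∃ R ⊆ G, Simple R ∧ Rainbow R ∧ IsCycleSet R ∧ Even R.card

/-- A long rainbow odd cycle: a rainbow cycle of odd length at least 7. -/
def IsLongRainbowOddCycle (G : Finset (Sym2 V × K)) : Prop :=
  Simple G ∧ Rainbow G ∧ IsCycleSet G ∧ Odd G.card ∧ 7 ≤ G.card

/-- A rainbow tree: a rainbow, acyclic, connected colored graph. -/
def IsRainbowTree (G : Finset (Sym2 V × K)) : Prop :=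
  Simple G ∧ Rainbow G ∧ (graphOf G).IsAcyclic ∧
    ∀ u ∈ vertSet G, ∀ v ∈ vertSet G, (graphOf G).Reachable u v

/-- A Frankenstein partition: each part is a long rainbow odd cycle, a bad piece or a
rainbow tree; distinct parts share at most one vertex and have disjoint colors; the
rainbow trees are pairwise vertex-disjoint; and the union contains no rainbow even
cycle subgraph. -/
def IsFrankensteinPartition {m : ℕ} (parts : Fin m → Finset (Sym2 V × K)) : Prop :=
  (∀ i j, i ≠ j → Set.Subsingleton (vertSet (parts i) ∩ vertSet (parts j))) ∧
  (∀ i j, i ≠ j → Disjoint (colorSet (parts i)) (colorSet (parts j))) ∧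
  (∀ i, IsLongRainbowOddCycle (parts i) ∨ IsBadPiece (parts i) ∨ IsRainbowTree (parts i)) ∧
  (∀ i j, i ≠ j → IsRainbowTree (parts i) → IsRainbowTree (parts j) →
    vertSet (parts i) ∩ vertSet (parts j) = ∅) ∧
  ¬ ContainsRainbowEvenCycle (Finset.univ.biUnion parts)

/-- A Frankenstein graph: a colored graph admitting a Frankenstein partition. -/
def IsFrankenstein (G : Finset (Sym2 V × K)) : Prop :=
  ∃ (m : ℕ) (parts : Fin m → Finset (Sym2 V × K)),
    1 ≤ m ∧ G = Finset.univ.biUnion parts ∧ IsFrankensteinPartition parts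

/-- The auxiliary bipartite incidence graph of a partition: parts on one side, vertices
shared by at least two parts on the other. -/
def auxGraph {m : ℕ} (parts : Fin m → Finset (Sym2 V × K)) :
    SimpleGraph (Fin m ⊕ V) :=
  SimpleGraph.fromRel (fun a b =>
    match a, b with
    | Sum.inl i, Sum.inr v =>
        v ∈ vertSet (parts i) ∧ ∃ j, j ≠ i ∧ v ∈ vertSet (parts j)
    | _, _ => False)


section Basics
set_option linter.unusedSectionVars false

open SimpleGraph Walk

variable {V K : Type*} [DecidableEq V] [DecidableEq K]

lemma mem_uedges' {G : Finset (Sym2 V × K)} {e : Sym2 V} :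
    e ∈ uedges G ↔ ∃ c, (e, c) ∈ G := Iff.rfl

lemma graphOf_adj {G : Finset (Sym2 V × K)} {x y : V} :
    (graphOf G).Adj x y ↔ s(x, y) ∈ uedges G ∧ x ≠ y := SimpleGraph.fromEdgeSet_adj _

lemma edgeSet_graphOf {G : Finset (Sym2 V × K)} :
    (graphOf G).edgeSet = uedges G \ {e | e.IsDiag} := SimpleGraph.edgeSet_fromEdgeSet _

lemma uedges_mono {G H : Finset (Sym2 V × K)} (h : G ⊆ H) : uedges G ⊆ uedges H :=
  fun _ he => he.imp fun _ hc => h hc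

lemma vertSet_mono {G H : Finset (Sym2 V × K)} (h : G ⊆ H) : vertSet G ⊆ vertSet H :=
  fun _ ⟨p, hp, hx⟩ => ⟨p, h hp, hx⟩

lemma colorSet_mono {G H : Finset (Sym2 V × K)} (h : G ⊆ H) : colorSet G ⊆ colorSet H :=
  fun _ he => he.imp fun _ hc => h hc

lemma mem_colorSet {G : Finset (Sym2 V × K)} {p : Sym2 V × K} (hp : p ∈ G) :
    p.2 ∈ colorSet G := ⟨p.1, hp⟩

lemma Simple.subset {G H : Finset (Sym2 V × K)} (hH : Simple H) (h : G ⊆ H) : Simple G :=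
  ⟨fun p hp => hH.1 p (h hp), fun p hp q hq => hH.2 p (h hp) q (h hq)⟩

lemma Rainbow.subset {G H : Finset (Sym2 V × K)} (hH : Rainbow H) (h : G ⊆ H) : Rainbow G :=
  fun p hp q hq => hH p (h hp) q (h hq)

lemma uedges_union {G H : Finset (Sym2 V × K)} :
    uedges (G ∪ H) = uedges G ∪ uedges H := by
  ext e
  constructor
  · rintro ⟨c, hc⟩
    rcases Finset.mem_union.mp hc with h | h
    · exact Or.inl ⟨c, h⟩
    · exact Or.inr ⟨c, h⟩
  · rintro (⟨c, hc⟩ | ⟨c, hc⟩)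
    · exact ⟨c, Finset.mem_union_left _ hc⟩
    · exact ⟨c, Finset.mem_union_right _ hc⟩

lemma vertSet_union {G H : Finset (Sym2 V × K)} :
    vertSet (G ∪ H) = vertSet G ∪ vertSet H := by
  ext x
  constructor
  · rintro ⟨p, hp, hx⟩
    rcases Finset.mem_union.mp hp with h | h
    · exact Or.inl ⟨p, h, hx⟩
    · exact Or.inr ⟨p, h, hx⟩
  · rintro (⟨p, hp, hx⟩ | ⟨p, hp, hx⟩)
    · exact ⟨p, Finset.mem_union_left _ hp, hx⟩
    · exact ⟨p, Finset.mem_union_right _ hp, hx⟩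

lemma mem_vertSet_of_uedge {G : Finset (Sym2 V × K)} {e : Sym2 V} (he : e ∈ uedges G)
    {x : V} (hx : x ∈ e) : x ∈ vertSet G := by
  obtain ⟨c, hc⟩ := he
  exact ⟨(e, c), hc, hx⟩

lemma card_eq_length {G : Finset (Sym2 V × K)} (hS : Simple G) {l : List (Sym2 V)}
    (hl : l.Nodup) (he : ∀ e, e ∈ uedges G ↔ e ∈ l) : G.card = l.length := by
  have h1 : G.card = (G.image Prod.fst).card := by
    rw [Finset.card_image_of_injOn]
    intro p hp q hq hpq
    exact hS.2 p hp q hq hpq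
  have h2 : G.image Prod.fst = l.toFinset := by
    ext e
    simp only [Finset.mem_image, List.mem_toFinset]
    constructor
    · rintro ⟨p, hp, rfl⟩
      exact (he p.1).mp ⟨p.2, hp⟩
    · intro hel
      obtain ⟨c, hc⟩ := (he e).mpr hel
      exact ⟨(e, c), hc, rfl⟩
  rw [h1, h2, List.toFinset_card_of_nodup hl]

lemma walk_edge_mem_uedges {G : Finset (Sym2 V × K)} {u v : V}
    {W : (graphOf G).Walk u v} {e : Sym2 V} (he : e ∈ W.edges) : e ∈ uedges G := by
  have h := W.edges_subset_edgeSet he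
  rw [edgeSet_graphOf] at h
  exact h.1

lemma support_subset_vertSet {G : Finset (Sym2 V × K)} {u v : V}
    (W : (graphOf G).Walk u v) (hne : ¬W.Nil) : ∀ x ∈ W.support, x ∈ vertSet G := by
  induction W with
  | nil => simp at hne
  | @cons a b c h p ih =>
    intro x hx
    have hadj := graphOf_adj.mp h
    rw [Walk.support_cons, List.mem_cons] at hx
    rcases hx with rfl | hx
    · exact mem_vertSet_of_uedge hadj.1 (Sym2.mem_mk_left _ _)
    · by_cases hp : p.Nil
      · rw [Walk.nil_iff_support_eq.mp hp, List.mem_singleton] at hx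
        subst hx
        exact mem_vertSet_of_uedge hadj.1 (Sym2.mem_mk_right _ _)
      · exact ih hp x hx

end Basics

section Paths
set_option linter.unusedSectionVars false
set_option maxHeartbeats 1000000

open SimpleGraph Walk

variable {V K : Type*} [DecidableEq V] [DecidableEq K]

lemma extract_path {G : Finset (Sym2 V × K)} {u v : V}
    (W : (graphOf G).Walk u v) (hW : W.IsPath) :
    ∃ Q : Finset (Sym2 V × K), Q ⊆ G ∧ IsPathSet Q u v ∧
      (∀ p : Sym2 V × K, p ∈ Q ↔ p ∈ G ∧ p.1 ∈ W.edges) ∧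
      vertSet Q ⊆ {x | x ∈ W.support} ∧
      (Simple G → Q.card = W.length) := by
  classical
  set Q := G.filter (fun p => p.1 ∈ W.edges) with hQdef
  have hmem : ∀ p : Sym2 V × K, p ∈ Q ↔ p ∈ G ∧ p.1 ∈ W.edges := by
    intro p; simp [hQdef]
  have hsub : Q ⊆ G := Finset.filter_subset _ _
  have hue : ∀ e, e ∈ uedges Q ↔ e ∈ W.edges := by
    intro e
    constructor
    · rintro ⟨c, hc⟩
      exact ((hmem _).mp hc).2
    · intro heW
      obtain ⟨c, hc⟩ := walk_edge_mem_uedges heW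
      exact ⟨c, (hmem _).mpr ⟨hc, heW⟩⟩
  have hEdges : ∀ e ∈ W.edges, e ∈ (graphOf Q).edgeSet := by
    intro e he
    rw [edgeSet_graphOf]
    refine ⟨(hue e).mpr he, ?_⟩
    have h := W.edges_subset_edgeSet he
    rw [edgeSet_graphOf] at h
    exact h.2
  refine ⟨Q, hsub, ⟨W.transfer (graphOf Q) hEdges, hW.transfer _, ?_⟩, hmem, ?_, ?_⟩
  · intro e
    rw [Walk.edges_transfer]
    exact hue e
  · rintro x ⟨p, hp, hx⟩
    obtain ⟨y, hy⟩ := Sym2.mem_iff_exists.mp hx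
    have hxy : s(x, y) ∈ W.edges := by
      rw [← hy]; exact ((hmem p).mp hp).2
    exact W.fst_mem_support_of_mem_edges hxy
  · intro hS
    have hc := card_eq_length (hS.subset hsub) hW.isTrail.edges_nodup hue
    rw [hc, Walk.length_edges]

lemma IsPathSet.symm {Q : Finset (Sym2 V × K)} {u v : V} (h : IsPathSet Q u v) :
    IsPathSet Q v u := by
  obtain ⟨W, hW, he⟩ := h
  exact ⟨W.reverse, hW.reverse, fun e => by
    rw [Walk.edges_reverse, List.mem_reverse]; exact he e⟩

lemma IsPathSet.left_mem {Q : Finset (Sym2 V × K)} {u v : V}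
    (h : IsPathSet Q u v) (huv : u ≠ v) : u ∈ vertSet Q := by
  obtain ⟨W, _, _⟩ := h
  exact support_subset_vertSet W (Walk.not_nil_of_ne huv) u W.start_mem_support

lemma IsPathSet.right_mem {Q : Finset (Sym2 V × K)} {u v : V}
    (h : IsPathSet Q u v) (huv : u ≠ v) : v ∈ vertSet Q :=
  h.symm.left_mem (Ne.symm huv)

lemma appendPathSets {Q1 Q2 : Finset (Sym2 V × K)} {u v w : V}
    (h1 : IsPathSet Q1 u v) (h2 : IsPathSet Q2 v w)
    (huv : u ≠ v) (hvw : v ≠ w)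
    (hint : vertSet Q1 ∩ vertSet Q2 ⊆ {v}) :
    IsPathSet (Q1 ∪ Q2) u w := by
  obtain ⟨W1, hW1, he1⟩ := h1
  obtain ⟨W2, hW2, he2⟩ := h2
  have hsub1 : ∀ e ∈ W1.edges, e ∈ (graphOf (Q1 ∪ Q2)).edgeSet := by
    intro e he
    rw [edgeSet_graphOf]
    refine ⟨by rw [uedges_union]; exact Or.inl ((he1 e).mpr he), ?_⟩
    have h := W1.edges_subset_edgeSet he
    rw [edgeSet_graphOf] at h
    exact h.2
  have hsub2 : ∀ e ∈ W2.edges, e ∈ (graphOf (Q1 ∪ Q2)).edgeSet := by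
    intro e he
    rw [edgeSet_graphOf]
    refine ⟨by rw [uedges_union]; exact Or.inr ((he2 e).mpr he), ?_⟩
    have h := W2.edges_subset_edgeSet he
    rw [edgeSet_graphOf] at h
    exact h.2
  refine ⟨(W1.transfer _ hsub1).append (W2.transfer _ hsub2), ?_, ?_⟩
  · rw [Walk.isPath_def, Walk.support_append, Walk.support_transfer, Walk.support_transfer]
    rw [List.nodup_append]
    refine ⟨hW1.support_nodup, hW2.support_nodup.sublist (List.tail_sublist _), ?_⟩
    intro x hx1 y hx2 hxy
    subst hxy
    have hx1' : x ∈ vertSet Q1 := support_subset_vertSet W1 (Walk.not_nil_of_ne huv) x hx1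
    have hx2' : x ∈ vertSet Q2 := support_subset_vertSet W2 (Walk.not_nil_of_ne hvw) x
      (List.mem_of_mem_tail hx2)
    have hxv : x = v := hint ⟨hx1', hx2'⟩
    subst hxv
    have hnd := hW2.support_nodup
    rw [W2.support_eq_cons] at hnd
    exact (List.nodup_cons.mp hnd).1 hx2
  · intro e
    rw [Walk.edges_append, Walk.edges_transfer, Walk.edges_transfer, uedges_union,
      List.mem_append]
    exact or_congr (he1 e) (he2 e)

lemma pathsToCycleSet {Q1 Q2 : Finset (Sym2 V × K)} {u v : V}
    (h1 : IsPathSet Q1 u v) (h2 : IsPathSet Q2 u v) (huv : u ≠ v)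
    (hint : vertSet Q1 ∩ vertSet Q2 ⊆ {u, v})
    (hedis : ∀ e, e ∈ uedges Q1 → e ∈ uedges Q2 → False) :
    IsCycleSet (Q1 ∪ Q2) := by
  obtain ⟨W1, hW1, he1⟩ := h1
  obtain ⟨W2, hW2, he2⟩ := h2
  have hsub1 : ∀ e ∈ W1.edges, e ∈ (graphOf (Q1 ∪ Q2)).edgeSet := by
    intro e he
    rw [edgeSet_graphOf]
    refine ⟨by rw [uedges_union]; exact Or.inl ((he1 e).mpr he), ?_⟩
    have h := W1.edges_subset_edgeSet he
    rw [edgeSet_graphOf] at h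
    exact h.2
  have hsub2 : ∀ e ∈ W2.edges, e ∈ (graphOf (Q1 ∪ Q2)).edgeSet := by
    intro e he
    rw [edgeSet_graphOf]
    refine ⟨by rw [uedges_union]; exact Or.inr ((he2 e).mpr he), ?_⟩
    have h := W2.edges_subset_edgeSet he
    rw [edgeSet_graphOf] at h
    exact h.2
  set T1 := W1.transfer _ hsub1 with hT1
  set T2 := W2.transfer _ hsub2 with hT2
  have hedgedis : ∀ e, e ∈ W1.edges → e ∈ W2.edges → False := fun e a b =>
    hedis e ((he1 e).mpr a) ((he2 e).mpr b)
  refine ⟨u, T1.append T2.reverse, ?_, ?_⟩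
  · rw [Walk.isCycle_def]
    refine ⟨⟨?_⟩, ?_, ?_⟩
    · -- edges nodup
      rw [Walk.edges_append, Walk.edges_reverse, hT1, hT2, Walk.edges_transfer,
        Walk.edges_transfer, List.nodup_append]
      refine ⟨hW1.isTrail.edges_nodup, List.nodup_reverse.mpr hW2.isTrail.edges_nodup, ?_⟩
      intro e he1' e' he2' hee
      subst hee
      exact hedgedis e he1' (List.mem_reverse.mp he2')
    · intro hnil
      have hlen := congrArg Walk.length hnil
      rw [Walk.length_append] at hlen
      simp only [Walk.length_nil] at hlen
      have h1 : T1.length = 0 := by omega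
      rw [hT1, Walk.length_transfer] at h1
      exact huv (Walk.eq_of_length_eq_zero h1)
    · rw [Walk.tail_support_append]
      rw [List.nodup_append]
      have hs1 : T1.support = W1.support := by rw [hT1, Walk.support_transfer]
      have hs2 : T2.reverse.support = W2.support.reverse := by
        rw [Walk.support_reverse, hT2, Walk.support_transfer]
      constructor
      · rw [hs1]; exact hW1.support_nodup.sublist (List.tail_sublist _)
      constructor
      · rw [hs2]; exact (List.nodup_reverse.mpr hW2.support_nodup).sublist (List.tail_sublist _)
      · intro x hx1 y hx2 hxy
        subst hxy
        have hx1s : x ∈ W1.support := by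
          rw [hs1] at hx1; exact List.mem_of_mem_tail hx1
        have hx2s : x ∈ W2.support := by
          rw [hs2] at hx2
          exact List.mem_reverse.mp (List.mem_of_mem_tail hx2)
        have hx1' : x ∈ vertSet Q1 := support_subset_vertSet W1 (Walk.not_nil_of_ne huv) x hx1s
        have hx2' : x ∈ vertSet Q2 := support_subset_vertSet W2 (Walk.not_nil_of_ne huv) x hx2s
        rcases hint ⟨hx1', hx2'⟩ with rfl | rfl
        · -- x = u : u ∉ T1.support.tail
          have hnd := hW1.support_nodup
          rw [W1.support_eq_cons] at hnd
          rw [hs1, W1.support_eq_cons] at hx1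
          exact (List.nodup_cons.mp hnd).1 hx1
        · -- x = v : v ∉ T2.reverse.support.tail
          have hnd : T2.reverse.support.Nodup := by
            rw [hs2]; exact List.nodup_reverse.mpr hW2.support_nodup
          rw [T2.reverse.support_eq_cons] at hnd hx2
          exact (List.nodup_cons.mp hnd).1 hx2
  · intro e
    rw [Walk.edges_append, Walk.edges_reverse, hT1, hT2, Walk.edges_transfer,
      Walk.edges_transfer, uedges_union, List.mem_append, List.mem_reverse]
    exact or_congr (he1 e) (he2 e)

end Paths

section Connectors
set_option linter.unusedSectionVars false
set_option maxHeartbeats 1000000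

open SimpleGraph Walk

variable {V K : Type*} [DecidableEq V] [DecidableEq K]

lemma not_mem_takeUntil {V' : Type*} [DecidableEq V'] {G : SimpleGraph V'} {a b c : V'}
    {p : G.Walk a b} (hp : p.IsPath) (h : c ∈ p.support) {x : V'}
    (hx : x ∈ (p.dropUntil c h).support) (hxc : x ≠ c) :
    x ∉ (p.takeUntil c h).support := by
  intro hx1
  have hsp := hp.support_nodup
  have hspl : p.support = (p.takeUntil c h).support ++ (p.dropUntil c h).support.tail := by
    rw [← Walk.support_append, p.take_spec h]
  rw [hspl] at hsp
  have hdis := (List.nodup_append.mp hsp).2.2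
  have hx2 : x ∈ (p.dropUntil c h).support.tail := by
    rw [(p.dropUntil c h).support_eq_cons] at hx
    rcases List.mem_cons.mp hx with rfl | hx
    · exact absurd rfl hxc
    · exact hx
  exact hdis x hx1 x hx2 rfl

lemma mem_support_of_mem_vertSet {G : Finset (Sym2 V × K)} {a b x : V}
    {W : (graphOf G).Walk a b} (he : ∀ e, e ∈ uedges G ↔ e ∈ W.edges)
    (hx : x ∈ vertSet G) : x ∈ W.support := by
  obtain ⟨p, hp, hxp⟩ := hx
  obtain ⟨y, hy⟩ := Sym2.mem_iff_exists.mp hxp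
  have hxy : s(x, y) ∈ W.edges := (he _).mp ⟨p.2, by rw [← hy]; exact hp⟩
  exact W.fst_mem_support_of_mem_edges hxy

/-- In a rainbow odd cycle, between any two vertices there are rainbow paths of both
parities. -/
lemma cycle_connector {G : Finset (Sym2 V × K)} (hS : Simple G) (hR : Rainbow G)
    (hC : IsCycleSet G) (hodd : Odd G.card) {u v : V}
    (hu : u ∈ vertSet G) (hv : v ∈ vertSet G) (huv : u ≠ v) (ε : ZMod 2) :
    ∃ Q, Q ⊆ G ∧ IsPathSet Q u v ∧ Rainbow Q ∧ (Q.card : ZMod 2) = ε := by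
  classical
  obtain ⟨w, W0, hW0, he0⟩ := hC
  -- rotate the cycle to start at u
  obtain ⟨W', hcyc, he, hvW⟩ :
      ∃ W' : (graphOf G).Walk u u, W'.IsCycle ∧ (∀ e, e ∈ uedges G ↔ e ∈ W'.edges) ∧
        v ∈ W'.support := by
    have huW : u ∈ W0.support := mem_support_of_mem_vertSet he0 hu
    refine ⟨W0.rotate u huW, hW0.rotate huW, ?_, ?_⟩
    · intro e
      rw [he0 e]
      exact ((W0.rotate_edges u huW).mem_iff).symm
    · have hvW : v ∈ W0.support := mem_support_of_mem_vertSet he0 hv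
      have hrot := W0.support_rotate u huW
      -- v in support iff in support.tail for closed walks
      have hmt : ∀ (x y : V) (c : (graphOf G).Walk x x), ¬c.Nil → y ∈ c.support →
          y ∈ c.support.tail := by
        intro x y c hc hy
        obtain ⟨z, hadj, q, rfl⟩ := Walk.not_nil_iff.mp hc
        rw [Walk.support_cons] at hy
        rw [Walk.support_cons, List.tail_cons]
        rcases List.mem_cons.mp hy with rfl | hy
        · exact q.end_mem_support
        · exact hy
      have hvt : v ∈ W0.support.tail := hmt _ _ _ hW0.not_nil hvW
      have : v ∈ (W0.rotate u huW).support.tail := hrot.mem_iff.mpr hvt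
      exact List.mem_of_mem_tail this
  obtain ⟨b, hadj, p, rfl⟩ := Walk.not_nil_iff.mp hcyc.not_nil
  have hpPath : p.IsPath := (Walk.cons_isCycle_iff _ _ |>.mp hcyc).1
  have hvp : v ∈ p.support := by
    have := hvW
    rw [Walk.support_cons] at this
    rcases List.mem_cons.mp this with rfl | h
    · exact absurd rfl huv
    · exact h
  -- split p at v
  have hP1path : (Walk.cons hadj (p.takeUntil v hvp)).IsPath := by
    rw [Walk.cons_isPath_iff]
    refine ⟨hpPath.takeUntil hvp, ?_⟩
    intro hu'
    exact not_mem_takeUntil hpPath hvp (p.dropUntil v hvp).end_mem_support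
      huv hu'
  have hP2path : (p.dropUntil v hvp).IsPath := hpPath.dropUntil hvp
  -- edge decomposition
  have hedgesplit : (Walk.cons hadj p).edges =
      (Walk.cons hadj (p.takeUntil v hvp)).edges ++ (p.dropUntil v hvp).edges := by
    rw [Walk.edges_cons, Walk.edges_cons, List.cons_append]
    congr 1
    rw [← Walk.edges_append, p.take_spec hvp]
  -- extract colored subsets
  obtain ⟨Q1, hQ1sub, hQ1path, hQ1mem, hQ1vert, hQ1card⟩ :=
    extract_path (Walk.cons hadj (p.takeUntil v hvp)) hP1path
  obtain ⟨Q2, hQ2sub, hQ2path, hQ2mem, hQ2vert, hQ2card⟩ :=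
    extract_path (p.dropUntil v hvp) hP2path
  have hcard : G.card = (Walk.cons hadj p).edges.length :=
    card_eq_length hS hcyc.isCircuit.isTrail.edges_nodup he
  have hsum : Q1.card + Q2.card = G.card := by
    rw [hQ1card hS, hQ2card hS, hcard, hedgesplit, List.length_append,
      Walk.length_edges, Walk.length_edges]
  -- parity selection
  have hparodd : (Q1.card : ZMod 2) + (Q2.card : ZMod 2) = 1 := by
    have : ((Q1.card + Q2.card : ℕ) : ZMod 2) = 1 := by
      rw [hsum]
      obtain ⟨r, hr⟩ := hodd
      rw [hr]
      push_cast
      rw [show ((2 : ZMod 2)) = 0 from rfl]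
      ring
    push_cast at this
    exact this
  by_cases hε : (Q1.card : ZMod 2) = ε
  · exact ⟨Q1, hQ1sub, hQ1path, hR.subset hQ1sub, hε⟩
  · refine ⟨Q2, hQ2sub, hQ2path.symm, hR.subset hQ2sub, ?_⟩
    have : ∀ a b c : ZMod 2, a + b = 1 → a ≠ c → b = c := by decide
    exact this _ _ _ hparodd hε

/-- In a rainbow tree, any two vertices are joined by a rainbow path. -/
lemma tree_connector {G : Finset (Sym2 V × K)} (hT : IsRainbowTree G) {u v : V}
    (hu : u ∈ vertSet G) (hv : v ∈ vertSet G) :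
    ∃ Q, Q ⊆ G ∧ IsPathSet Q u v ∧ Rainbow Q := by
  obtain ⟨W⟩ := hT.2.2.2 u hu v hv
  obtain ⟨Q, hsub, hpath, _, _, _⟩ := extract_path (W.toPath : (graphOf G).Path u v).1
    (W.toPath).2
  exact ⟨Q, hsub, hpath, hT.2.1.subset hsub⟩

end Connectors

section BadPiece
set_option linter.unusedSectionVars false
set_option maxHeartbeats 1000000

open SimpleGraph Walk

variable {V K : Type*} [DecidableEq V] [DecidableEq K]

lemma not_mem_dropUntil {V' : Type*} [DecidableEq V'] {G : SimpleGraph V'} {a b c : V'}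
    {p : G.Walk a b} (hp : p.IsPath) (h : c ∈ p.support) {x : V'}
    (hx : x ∈ (p.takeUntil c h).support) (hxc : x ≠ c) :
    x ∉ (p.dropUntil c h).support := by
  intro hx2
  have hsp := hp.support_nodup
  have hspl : p.support = (p.takeUntil c h).support ++ (p.dropUntil c h).support.tail := by
    rw [← Walk.support_append, p.take_spec h]
  rw [hspl] at hsp
  have hdis := (List.nodup_append.mp hsp).2.2
  have hx2' : x ∈ (p.dropUntil c h).support.tail := by
    rw [(p.dropUntil c h).support_eq_cons] at hx2
    rcases List.mem_cons.mp hx2 with rfl | hx2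
    · exact absurd rfl hxc
    · exact hx2
  exact hdis x hx x hx2' rfl

/-- The almost-rainbow analysis: a colored graph with one fewer color than edges
has a unique repeated color pair, and removing either member leaves a rainbow graph. -/
lemma repeated_color {G : Finset (Sym2 V × K)} (hcard : 1 ≤ G.card)
    (hcol : (colorSet G).ncard = G.card - 1) :
    ∃ pa ∈ G, ∃ pb ∈ G, pa ≠ pb ∧ pa.2 = pb.2 ∧
      ∀ S ⊆ G, (pa ∉ S ∨ pb ∉ S) → Rainbow S := by
  classical
  have hset : colorSet G = ↑(G.image Prod.snd) := by
    ext c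
    simp only [colorSet, Set.mem_setOf_eq, Finset.coe_image, Set.mem_image,
      Finset.mem_coe]
    constructor
    · rintro ⟨e, he⟩; exact ⟨(e, c), he, rfl⟩
    · rintro ⟨p, hp, rfl⟩; exact ⟨p.1, hp⟩
  have himg : (G.image Prod.snd).card = G.card - 1 := by
    rw [← Set.ncard_coe_finset, ← hset, hcol]
  have hlt : (G.image Prod.snd).card < G.card := by omega
  obtain ⟨pa, ha, pb, hb, hne, heq⟩ :=
    Finset.exists_ne_map_eq_of_card_lt_of_maps_to hlt
      (fun x hx => Finset.mem_image_of_mem Prod.snd hx)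
  have herase : ∀ r ∈ G, ∀ r' ∈ G, r ≠ r' → r.2 = r'.2 → Rainbow (G.erase r') := by
    intro r hr r' hr' hne' heq'
    have himg2 : (G.erase r').image Prod.snd = G.image Prod.snd := by
      apply Finset.Subset.antisymm
      · exact Finset.image_subset_image (Finset.erase_subset _ _)
      · intro c hc
        obtain ⟨q, hq, rfl⟩ := Finset.mem_image.mp hc
        by_cases hqr : q = r'
        · subst hqr
          exact Finset.mem_image.mpr ⟨r, Finset.mem_erase.mpr ⟨hne', hr⟩, heq'⟩
        · exact Finset.mem_image.mpr ⟨q, Finset.mem_erase.mpr ⟨hqr, hq⟩, rfl⟩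
    have hcards : ((G.erase r').image Prod.snd).card = (G.erase r').card := by
      rw [himg2, himg, Finset.card_erase_of_mem hr']
    have hinj := Finset.card_image_iff.mp hcards
    intro p hp q hq hpq
    exact hinj hp hq hpq
  refine ⟨pa, ha, pb, hb, hne, heq, ?_⟩
  intro S hS hcond
  rcases hcond with hpaS | hpbS
  · refine (herase pb hb pa ha (Ne.symm hne) heq.symm).subset ?_
    intro x hx
    exact Finset.mem_erase.mpr ⟨fun h => hpaS (h ▸ hx), hS hx⟩
  · refine (herase pa ha pb hb hne heq).subset ?_
    intro x hx
    exact Finset.mem_erase.mpr ⟨fun h => hpbS (h ▸ hx), hS hx⟩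

end BadPiece

section BadCore
set_option linter.unusedSectionVars false
set_option maxHeartbeats 1000000

open SimpleGraph Walk

variable {V K : Type*} [DecidableEq V] [DecidableEq K]

lemma odd_cast_zmod {n : ℕ} (h : Odd n) : (n : ZMod 2) = 1 := by
  obtain ⟨r, rfl⟩ := h
  push_cast
  rw [show ((2 : ZMod 2)) = 0 from rfl]
  ring

lemma bad_core {G A B C : Finset (Sym2 V × K)} {s t u v : V} {pa pb : Sym2 V × K}
    (hA : A ⊆ G) (hB : B ⊆ G) (hC : C ⊆ G) (hS : Simple G)
    (hrb : ∀ S ⊆ G, (pa ∉ S ∨ pb ∉ S) → Rainbow S)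
    (hpa : pa ∈ A) (hpb : pb ∈ B)
    (hPA : IsPathSet A s t) (hPB : IsPathSet B s t) (hPC : IsPathSet C s t)
    (hst : s ≠ t)
    (hABv : vertSet A ∩ vertSet B ⊆ {s, t})
    (hACv : vertSet A ∩ vertSet C ⊆ {s, t})
    (hBCv : vertSet B ∩ vertSet C ⊆ {s, t})
    (hABd : ∀ p : Sym2 V × K, p ∈ A → p ∈ B → False)
    (hACd : ∀ p : Sym2 V × K, p ∈ A → p ∈ C → False)
    (hBCd : ∀ p : Sym2 V × K, p ∈ B → p ∈ C → False)
    (hoddAC : Odd (A.card + C.card)) (hoddBC : Odd (B.card + C.card))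
    (hu : u ∈ vertSet A) (hu' : u ∉ vertSet B)
    (hv : v ∈ vertSet B) (hv' : v ∉ vertSet A) (ε : ZMod 2) :
    ∃ Q, Q ⊆ G ∧ IsPathSet Q u v ∧ Rainbow Q ∧ (Q.card : ZMod 2) = ε := by
  classical
  have hus : u ≠ s := fun h => hu' (h ▸ hPB.left_mem hst)
  have hut : u ≠ t := fun h => hu' (h ▸ hPB.right_mem hst)
  have hvs : v ≠ s := fun h => hv' (h ▸ hPA.left_mem hst)
  have hvt : v ≠ t := fun h => hv' (h ▸ hPA.right_mem hst)
  have huv : u ≠ v := fun h => hu' (h ▸ hv)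
  obtain ⟨WA, hWApath, heA⟩ := hPA
  obtain ⟨WB, hWBpath, heB⟩ := hPB
  have husup : u ∈ WA.support := mem_support_of_mem_vertSet heA hu
  have hvsup : v ∈ WB.support := mem_support_of_mem_vertSet heB hv
  obtain ⟨QA1, hQA1sub, hQA1path, hQA1mem, hQA1vert, hQA1card⟩ :=
    extract_path (WA.takeUntil u husup) (hWApath.takeUntil husup)
  obtain ⟨QA2, hQA2sub, hQA2path, hQA2mem, hQA2vert, hQA2card⟩ :=
    extract_path (WA.dropUntil u husup) (hWApath.dropUntil husup)
  obtain ⟨QB1, hQB1sub, hQB1path, hQB1mem, hQB1vert, hQB1card⟩ :=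
    extract_path (WB.takeUntil v hvsup) (hWBpath.takeUntil hvsup)
  obtain ⟨QB2, hQB2sub, hQB2path, hQB2mem, hQB2vert, hQB2card⟩ :=
    extract_path (WB.dropUntil v hvsup) (hWBpath.dropUntil hvsup)
  -- excluded endpoints on the half-paths
  have htA1 : t ∉ (WA.takeUntil u husup).support :=
    not_mem_takeUntil hWApath husup (WA.dropUntil u husup).end_mem_support hut.symm
  have hsA2 : s ∉ (WA.dropUntil u husup).support :=
    not_mem_dropUntil hWApath husup (WA.takeUntil u husup).start_mem_support hus.symm
  have htB1 : t ∉ (WB.takeUntil v hvsup).support :=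
    not_mem_takeUntil hWBpath hvsup (WB.dropUntil v hvsup).end_mem_support hvt.symm
  have hsB2 : s ∉ (WB.dropUntil v hvsup).support :=
    not_mem_dropUntil hWBpath hvsup (WB.takeUntil v hvsup).start_mem_support hvs.symm
  have htQA1 : t ∉ vertSet QA1 := fun h => htA1 (hQA1vert h)
  have hsQA2 : s ∉ vertSet QA2 := fun h => hsA2 (hQA2vert h)
  have htQB1 : t ∉ vertSet QB1 := fun h => htB1 (hQB1vert h)
  have hsQB2 : s ∉ vertSet QB2 := fun h => hsB2 (hQB2vert h)
  -- edge splits and cards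
  have hAedges : WA.edges = (WA.takeUntil u husup).edges ++ (WA.dropUntil u husup).edges := by
    conv_lhs => rw [← WA.take_spec husup]
    rw [Walk.edges_append]
  have hBedges : WB.edges = (WB.takeUntil v hvsup).edges ++ (WB.dropUntil v hvsup).edges := by
    conv_lhs => rw [← WB.take_spec hvsup]
    rw [Walk.edges_append]
  have hAcard : A.card = QA1.card + QA2.card := by
    have h1 := card_eq_length (hS.subset hA) hWApath.isTrail.edges_nodup heA
    rw [h1, hAedges, List.length_append, hQA1card (hS.subset hA), hQA2card (hS.subset hA),
      Walk.length_edges, Walk.length_edges]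
  have hBcard : B.card = QB1.card + QB2.card := by
    have h1 := card_eq_length (hS.subset hB) hWBpath.isTrail.edges_nodup heB
    rw [h1, hBedges, List.length_append, hQB1card (hS.subset hB), hQB2card (hS.subset hB),
      Walk.length_edges, Walk.length_edges]
  -- location of the repeated pair
  have hpasplit : pa ∈ QA1 ∨ pa ∈ QA2 := by
    have hpaA : pa.1 ∈ WA.edges := (heA pa.1).mp ⟨pa.2, hpa⟩
    rw [hAedges, List.mem_append] at hpaA
    rcases hpaA with h | h
    · exact Or.inl ((hQA1mem pa).mpr ⟨hpa, h⟩)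
    · exact Or.inr ((hQA2mem pa).mpr ⟨hpa, h⟩)
  have hpaexcl : ¬(pa ∈ QA1 ∧ pa ∈ QA2) := by
    rintro ⟨h1, h2⟩
    have hnd := hWApath.isTrail.edges_nodup
    rw [hAedges, List.nodup_append] at hnd
    exact hnd.2.2 _ ((hQA1mem pa).mp h1).2 _ ((hQA2mem pa).mp h2).2 rfl
  have hpbsplit : pb ∈ QB1 ∨ pb ∈ QB2 := by
    have hpbB : pb.1 ∈ WB.edges := (heB pb.1).mp ⟨pb.2, hpb⟩
    rw [hBedges, List.mem_append] at hpbB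
    rcases hpbB with h | h
    · exact Or.inl ((hQB1mem pb).mpr ⟨hpb, h⟩)
    · exact Or.inr ((hQB2mem pb).mpr ⟨hpb, h⟩)
  have hpbexcl : ¬(pb ∈ QB1 ∧ pb ∈ QB2) := by
    rintro ⟨h1, h2⟩
    have hnd := hWBpath.isTrail.edges_nodup
    rw [hBedges, List.nodup_append] at hnd
    exact hnd.2.2 _ ((hQB1mem pb).mp h1).2 _ ((hQB2mem pb).mp h2).2 rfl
  have hpaC : pa ∉ C := fun h => hACd pa hpa h
  have hpbC : pb ∉ C := fun h => hBCd pb hpb h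
  have hpaB : ∀ {X : Finset (Sym2 V × K)}, X ⊆ B → pa ∉ X := fun hX h => hABd pa hpa (hX h)
  have hpbA : ∀ {X : Finset (Sym2 V × K)}, X ⊆ A → pb ∉ X := fun hX h => hABd pb (hX h) hpb
  -- vertex-intersection facts
  have hmixv : ∀ {X Y : Finset (Sym2 V × K)}, X ⊆ A → Y ⊆ B →
      ∀ x, x ∈ vertSet X → x ∈ vertSet Y → x = s ∨ x = t := by
    intro X Y hX hY x hx hy
    have := hABv ⟨vertSet_mono hX hx, vertSet_mono hY hy⟩
    rcases this with h | h
    · exact Or.inl h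
    · exact Or.inr h
  -- route 1 : QA1 ∪ QB1 (through s)
  have hv11 : vertSet QA1 ∩ vertSet QB1 ⊆ {s} := by
    rintro x ⟨hx1, hx2⟩
    rcases hmixv hQA1sub hQB1sub x hx1 hx2 with rfl | rfl
    · rfl
    · exact absurd hx1 htQA1
  have hroute1 : IsPathSet (QA1 ∪ QB1) u v :=
    appendPathSets hQA1path.symm hQB1path hus hvs.symm hv11
  have hd11 : Disjoint QA1 QB1 := Finset.disjoint_left.mpr
    (fun p h1 h2 => (hABd p (hQA1sub h1) (hQB1sub h2)).elim)
  have hc1 : (QA1 ∪ QB1).card = QA1.card + QB1.card := Finset.card_union_of_disjoint hd11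
  -- route 2 : QA2 ∪ QB2 (through t)
  have hv22 : vertSet QA2 ∩ vertSet QB2 ⊆ {t} := by
    rintro x ⟨hx1, hx2⟩
    rcases hmixv hQA2sub hQB2sub x hx1 hx2 with rfl | rfl
    · exact absurd hx1 hsQA2
    · rfl
  have hroute2 : IsPathSet (QA2 ∪ QB2) u v :=
    appendPathSets hQA2path hQB2path.symm hut hvt.symm hv22
  have hd22 : Disjoint QA2 QB2 := Finset.disjoint_left.mpr
    (fun p h1 h2 => (hABd p (hQA2sub h1) (hQB2sub h2)).elim)
  have hc2 : (QA2 ∪ QB2).card = QA2.card + QB2.card := Finset.card_union_of_disjoint hd22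
  -- route 3 : QA1 ∪ C ∪ QB2 (u → s → t → v)
  have hv1C : vertSet QA1 ∩ vertSet C ⊆ {s} := by
    rintro x ⟨hx1, hx2⟩
    rcases hACv ⟨vertSet_mono hQA1sub hx1, hx2⟩ with rfl | h
    · rfl
    · rw [Set.mem_singleton_iff] at h
      subst h
      exact absurd hx1 htQA1
  have hT3 : IsPathSet (QA1 ∪ C) u t :=
    appendPathSets hQA1path.symm hPC hus hst hv1C
  have hv3 : vertSet (QA1 ∪ C) ∩ vertSet QB2 ⊆ {t} := by
    rintro x ⟨hx1, hx2⟩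
    rw [vertSet_union] at hx1
    rcases hx1 with hx1 | hx1
    · rcases hmixv hQA1sub hQB2sub x hx1 hx2 with rfl | rfl
      · exact absurd hx2 hsQB2
      · rfl
    · rcases hBCv ⟨vertSet_mono hQB2sub hx2, hx1⟩ with rfl | h
      · exact absurd hx2 hsQB2
      · exact h
  have hroute3 : IsPathSet ((QA1 ∪ C) ∪ QB2) u v :=
    appendPathSets hT3 hQB2path.symm hut hvt.symm hv3
  have hc3 : ((QA1 ∪ C) ∪ QB2).card = QA1.card + C.card + QB2.card := by
    have hd1C : Disjoint QA1 C := Finset.disjoint_left.mpr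
      (fun p h1 h2 => (hACd p (hQA1sub h1) h2).elim)
    have hd3 : Disjoint (QA1 ∪ C) QB2 := Finset.disjoint_left.mpr (by
      intro p hp hp2
      rcases Finset.mem_union.mp hp with h | h
      · exact hABd _ (hQA1sub h) (hQB2sub hp2)
      · exact hBCd _ (hQB2sub hp2) h)
    rw [Finset.card_union_of_disjoint hd3, Finset.card_union_of_disjoint hd1C]
  -- route 4 : QA2 ∪ C ∪ QB1 (u → t → s → v)
  have hv2C : vertSet QA2 ∩ vertSet C ⊆ {t} := by
    rintro x ⟨hx1, hx2⟩
    rcases hACv ⟨vertSet_mono hQA2sub hx1, hx2⟩ with rfl | h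
    · exact absurd hx1 hsQA2
    · exact h
  have hT4 : IsPathSet (QA2 ∪ C) u s :=
    appendPathSets hQA2path hPC.symm hut hst.symm hv2C
  have hv4 : vertSet (QA2 ∪ C) ∩ vertSet QB1 ⊆ {s} := by
    rintro x ⟨hx1, hx2⟩
    rw [vertSet_union] at hx1
    rcases hx1 with hx1 | hx1
    · rcases hmixv hQA2sub hQB1sub x hx1 hx2 with rfl | rfl
      · rfl
      · exact absurd hx2 htQB1
    · rcases hBCv ⟨vertSet_mono hQB1sub hx2, hx1⟩ with rfl | h
      · rfl
      · rw [Set.mem_singleton_iff] at h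
        subst h
        exact absurd hx2 htQB1
  have hroute4 : IsPathSet ((QA2 ∪ C) ∪ QB1) u v :=
    appendPathSets hT4 hQB1path hus hvs.symm hv4
  have hc4 : ((QA2 ∪ C) ∪ QB1).card = QA2.card + C.card + QB1.card := by
    have hd2C : Disjoint QA2 C := Finset.disjoint_left.mpr
      (fun p h1 h2 => (hACd p (hQA2sub h1) h2).elim)
    have hd4 : Disjoint (QA2 ∪ C) QB1 := Finset.disjoint_left.mpr (by
      intro p hp hp2
      rcases Finset.mem_union.mp hp with h | h
      · exact hABd _ (hQA2sub h) (hQB1sub hp2)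
      · exact hBCd _ (hQB1sub hp2) h)
    rw [Finset.card_union_of_disjoint hd4, Finset.card_union_of_disjoint hd2C]
  -- parity bookkeeping in ZMod 2
  have hzA : (QA1.card : ZMod 2) + QA2.card = (A.card : ZMod 2) := by
    rw [hAcard]; push_cast; ring
  have hzB : (QB1.card : ZMod 2) + QB2.card = (B.card : ZMod 2) := by
    rw [hBcard]; push_cast; ring
  have hzAC : (A.card : ZMod 2) + C.card = 1 := by
    have := odd_cast_zmod hoddAC; push_cast at this; exact this
  have hzBC : (B.card : ZMod 2) + C.card = 1 := by
    have := odd_cast_zmod hoddBC; push_cast at this; exact this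
  have hpar : ∀ x1 x2 y1 y2 zA zB zC : ZMod 2, x1 + x2 = zA → y1 + y2 = zB →
      zA + zC = 1 → zB + zC = 1 →
      x2 + y2 = x1 + y1 ∧ x1 + zC + y2 = x1 + y1 + 1 ∧ x2 + zC + y1 = x1 + y1 + 1 := by
    decide
  obtain ⟨hp12, hp3, hp4⟩ := hpar _ _ _ _ _ _ _ hzA hzB hzAC hzBC
  -- final selection
  by_cases hε : (QA1.card : ZMod 2) + QB1.card = ε
  · by_cases hw : pa ∈ QA1 ∧ pb ∈ QB1
    · -- use route 2
      have hsub : QA2 ∪ QB2 ⊆ G :=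
        Finset.union_subset (hQA2sub.trans hA) (hQB2sub.trans hB)
      refine ⟨QA2 ∪ QB2, hsub, hroute2, hrb _ hsub ?_, ?_⟩
      · left
        intro hmem
        rcases Finset.mem_union.mp hmem with h | h
        · exact hpaexcl ⟨hw.1, h⟩
        · exact hpaB hQB2sub h
      · rw [hc2]
        push_cast
        rw [hp12]
        exact hε
    · -- use route 1
      have hsub : QA1 ∪ QB1 ⊆ G :=
        Finset.union_subset (hQA1sub.trans hA) (hQB1sub.trans hB)
      refine ⟨QA1 ∪ QB1, hsub, hroute1, hrb _ hsub ?_, ?_⟩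
      · rcases Decidable.not_and_iff_or_not.mp hw with h | h
        · left
          intro hmem
          rcases Finset.mem_union.mp hmem with h' | h'
          · exact h h'
          · exact hpaB hQB1sub h'
        · right
          intro hmem
          rcases Finset.mem_union.mp hmem with h' | h'
          · exact hpbA hQA1sub h'
          · exact h h'
      · rw [hc1]; push_cast; exact hε
  · have hεeq : (QA1.card : ZMod 2) + QB1.card + 1 = ε := by
      have : ∀ x y : ZMod 2, x ≠ y → x + 1 = y := by decide
      exact this _ _ hε
    by_cases hw : pa ∈ QA1 ∧ pb ∈ QB2
    · -- use route 4
      have hsub : (QA2 ∪ C) ∪ QB1 ⊆ G :=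
        Finset.union_subset (Finset.union_subset (hQA2sub.trans hA) hC) (hQB1sub.trans hB)
      refine ⟨(QA2 ∪ C) ∪ QB1, hsub, hroute4, hrb _ hsub ?_, ?_⟩
      · left
        intro hmem
        rcases Finset.mem_union.mp hmem with h | h
        · rcases Finset.mem_union.mp h with h' | h'
          · exact hpaexcl ⟨hw.1, h'⟩
          · exact hpaC h'
        · exact hpaB hQB1sub h
      · rw [hc4]
        push_cast
        rw [show ((QA2.card : ZMod 2) + C.card + QB1.card)
            = (QA2.card : ZMod 2) + (C.card : ZMod 2) + (QB1.card : ZMod 2) by push_cast; ring]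
        rw [hp4]
        exact hεeq
    · -- use route 3
      have hsub : (QA1 ∪ C) ∪ QB2 ⊆ G :=
        Finset.union_subset (Finset.union_subset (hQA1sub.trans hA) hC) (hQB2sub.trans hB)
      refine ⟨(QA1 ∪ C) ∪ QB2, hsub, hroute3, hrb _ hsub ?_, ?_⟩
      · rcases Decidable.not_and_iff_or_not.mp hw with h | h
        · left
          intro hmem
          rcases Finset.mem_union.mp hmem with h' | h'
          · rcases Finset.mem_union.mp h' with h'' | h''
            · exact h h''
            · exact hpaC h''
          · exact hpaB hQB2sub h'
        · right
          intro hmem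
          rcases Finset.mem_union.mp hmem with h' | h'
          · rcases Finset.mem_union.mp h' with h'' | h''
            · exact hpbA hQA1sub h''
            · exact hpbC h''
          · exact h h'
      · rw [hc3]
        push_cast
        rw [hp3]
        exact hεeq

end BadCore

section BadConnector
set_option linter.unusedSectionVars false
set_option maxHeartbeats 1000000

open SimpleGraph Walk

variable {V K : Type*} [DecidableEq V] [DecidableEq K]

lemma bad_connector {G : Finset (Sym2 V × K)} (hBP : IsBadPiece G)
    (hNo : ¬ ContainsRainbowEvenCycle G) {u v : V}
    (hu : u ∈ vertSet G) (hv : v ∈ vertSet G) (huv : u ≠ v) (ε : ZMod 2) :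
    ∃ Q, Q ⊆ G ∧ IsPathSet Q u v ∧ Rainbow Q ∧ (Q.card : ZMod 2) = ε := by
  classical
  obtain ⟨hS, hcol, -, s, t, hst, P, hGP, hPaths, hVij, hEij⟩ := hBP
  have hPsub : ∀ i, P i ⊆ G := by
    intro i
    fin_cases i <;> intro p hp <;> rw [hGP] <;> simp only [Finset.mem_union]
    · exact Or.inl (Or.inl hp)
    · exact Or.inl (Or.inr hp)
    · exact Or.inr hp
  have hmemG : ∀ p ∈ G, p ∈ P 0 ∨ p ∈ P 1 ∨ p ∈ P 2 := by
    intro p hp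
    rw [hGP] at hp
    rcases Finset.mem_union.mp hp with h | h
    · rcases Finset.mem_union.mp h with h' | h'
      · exact Or.inl h'
      · exact Or.inr (Or.inl h')
    · exact Or.inr (Or.inr h)
  have hPd : ∀ i j, i ≠ j → ∀ p : Sym2 V × K, p ∈ P i → p ∈ P j → False := by
    intro i j hij p hpi hpj
    have hmem : p.1 ∈ uedges (P i) ∩ uedges (P j) := ⟨⟨p.2, hpi⟩, ⟨p.2, hpj⟩⟩
    rw [hEij i j hij] at hmem
    exact hmem
  have hcardU : ∀ i j, i ≠ j → (P i ∪ P j).card = (P i).card + (P j).card :=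
    fun i j hij => Finset.card_union_of_disjoint (Finset.disjoint_left.mpr
      fun p h1 h2 => (hPd i j hij p h1 h2).elim)
  have hGcard1 : 1 ≤ G.card := by
    obtain ⟨p, hp, -⟩ := (hPaths 0).1.left_mem hst
    exact Finset.card_pos.mpr ⟨p, hPsub 0 hp⟩
  obtain ⟨pa, hpaG, pb, hpbG, hpabne, hpcol, hrb⟩ := repeated_color hGcard1 hcol
  obtain ⟨a0, hpa⟩ : ∃ i, pa ∈ P i := by
    rcases hmemG pa hpaG with h | h | h
    exacts [⟨0, h⟩, ⟨1, h⟩, ⟨2, h⟩]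
  obtain ⟨b0, hpb⟩ : ∃ i, pb ∈ P i := by
    rcases hmemG pb hpbG with h | h | h
    exacts [⟨0, h⟩, ⟨1, h⟩, ⟨2, h⟩]
  have hab : a0 ≠ b0 := by
    intro h
    subst h
    exact hpabne ((hPaths a0).2 pa hpa pb hpb hpcol)
  obtain ⟨c0, hc0a, hc0b⟩ : ∃ c, c ≠ a0 ∧ c ≠ b0 := by
    have : ∀ a b : Fin 3, a ≠ b → ∃ c, c ≠ a ∧ c ≠ b := by decide
    exact this a0 b0 hab
  have hZcyc : ∀ i j, i ≠ j → IsCycleSet (P i ∪ P j) := by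
    intro i j hij
    refine pathsToCycleSet (hPaths i).1 (hPaths j).1 hst ?_ ?_
    · rw [hVij i j hij]
    · intro e he1 he2
      have hmem : e ∈ uedges (P i) ∩ uedges (P j) := ⟨he1, he2⟩
      rw [hEij i j hij] at hmem
      exact hmem
  have hpanot : ∀ i j, i ≠ a0 → j ≠ a0 → pa ∉ P i ∪ P j := by
    intro i j hi hj hmem
    rcases Finset.mem_union.mp hmem with h | h
    · exact hPd i a0 hi pa h hpa
    · exact hPd j a0 hj pa h hpa
  have hpbnot : ∀ i j, i ≠ b0 → j ≠ b0 → pb ∉ P i ∪ P j := by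
    intro i j hi hj hmem
    rcases Finset.mem_union.mp hmem with h | h
    · exact hPd i b0 hi pb h hpb
    · exact hPd j b0 hj pb h hpb
  have hZodd : ∀ i j (hij : i ≠ j), (pa ∉ P i ∪ P j ∨ pb ∉ P i ∪ P j) →
      Odd ((P i ∪ P j).card) := by
    intro i j hij hcond
    rcases Nat.even_or_odd ((P i ∪ P j).card) with he | ho
    · exfalso
      apply hNo
      have hsubZ : P i ∪ P j ⊆ G := Finset.union_subset (hPsub i) (hPsub j)
      exact ⟨P i ∪ P j, hsubZ, hS.subset hsubZ, hrb _ hsubZ hcond, hZcyc i j hij, he⟩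
    · exact ho
  have caseA : ∀ i j, i ≠ j → u ∈ vertSet (P i) ∪ vertSet (P j) →
      v ∈ vertSet (P i) ∪ vertSet (P j) → (pa ∉ P i ∪ P j ∨ pb ∉ P i ∪ P j) →
      ∃ Q, Q ⊆ G ∧ IsPathSet Q u v ∧ Rainbow Q ∧ (Q.card : ZMod 2) = ε := by
    intro i j hij hu2 hv2 hcond
    have hsubZ : P i ∪ P j ⊆ G := Finset.union_subset (hPsub i) (hPsub j)
    obtain ⟨Q, hQsub, hQpath, hQrb, hQpar⟩ := cycle_connector (hS.subset hsubZ)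
      (hrb _ hsubZ hcond) (hZcyc i j hij) (hZodd i j hij hcond)
      (by rw [vertSet_union]; exact hu2) (by rw [vertSet_union]; exact hv2) huv ε
    exact ⟨Q, hQsub.trans hsubZ, hQpath, hQrb, hQpar⟩
  have huniv : ∀ i : Fin 3, i = a0 ∨ i = b0 ∨ i = c0 := by
    have : ∀ a b c i : Fin 3, a ≠ b → c ≠ a → c ≠ b → (i = a ∨ i = b ∨ i = c) := by decide
    exact fun i => this a0 b0 c0 i hab hc0a hc0b
  have hstall : ∀ i : Fin 3, s ∈ vertSet (P i) ∧ t ∈ vertSet (P i) :=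
    fun i => ⟨(hPaths i).1.left_mem hst, (hPaths i).1.right_mem hst⟩
  have hall : ∀ x, (∃ i j, i ≠ j ∧ x ∈ vertSet (P i) ∧ x ∈ vertSet (P j)) →
      ∀ k, x ∈ vertSet (P k) := by
    rintro x ⟨i, j, hij, hxi, hxj⟩ k
    have hmem : x ∈ vertSet (P i) ∩ vertSet (P j) := ⟨hxi, hxj⟩
    rw [hVij i j hij] at hmem
    rcases hmem with rfl | hmem
    · exact (hstall k).1
    · rw [Set.mem_singleton_iff] at hmem
      subst hmem
      exact (hstall k).2
  have choosepair : ∀ iy : Fin 3, ∃ i j, i ≠ j ∧ (pa ∉ P i ∪ P j ∨ pb ∉ P i ∪ P j) ∧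
      (iy = i ∨ iy = j) ∧ (c0 = i ∨ c0 = j) := by
    intro iy
    by_cases h1 : iy = b0
    · exact ⟨c0, b0, hc0b, Or.inl (hpanot c0 b0 hc0a (Ne.symm hab)), Or.inr h1, Or.inl rfl⟩
    · refine ⟨c0, a0, hc0a, Or.inr (hpbnot c0 a0 hc0b hab), ?_, Or.inl rfl⟩
      rcases huniv iy with h | h | h
      · exact Or.inr h
      · exact absurd h h1
      · exact Or.inl h
  obtain ⟨iu, hiu⟩ : ∃ i, u ∈ vertSet (P i) := by
    have := hu
    rw [hGP, vertSet_union, vertSet_union] at this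
    rcases this with (h | h) | h
    exacts [⟨0, h⟩, ⟨1, h⟩, ⟨2, h⟩]
  obtain ⟨iv, hiv⟩ : ∃ i, v ∈ vertSet (P i) := by
    have := hv
    rw [hGP, vertSet_union, vertSet_union] at this
    rcases this with (h | h) | h
    exacts [⟨0, h⟩, ⟨1, h⟩, ⟨2, h⟩]
  by_cases hu2 : ∃ i j, i ≠ j ∧ u ∈ vertSet (P i) ∧ u ∈ vertSet (P j)
  · -- u belongs to every part
    have huall := hall u hu2
    obtain ⟨i, j, hij, hcond, hiv', hc0'⟩ := choosepair iv
    refine caseA i j hij (Or.inl (huall i)) ?_ hcond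
    rcases hiv' with rfl | rfl
    · exact Or.inl hiv
    · exact Or.inr hiv
  by_cases hv2 : ∃ i j, i ≠ j ∧ v ∈ vertSet (P i) ∧ v ∈ vertSet (P j)
  · have hvall := hall v hv2
    obtain ⟨i, j, hij, hcond, hiu', hc0'⟩ := choosepair iu
    refine caseA i j hij ?_ (Or.inl (hvall i)) hcond
    rcases hiu' with rfl | rfl
    · exact Or.inl hiu
    · exact Or.inr hiu
  -- u and v each belong to exactly one part
  push_neg at hu2 hv2
  have huonly : ∀ j, j ≠ iu → u ∉ vertSet (P j) := fun j hj => hu2 iu j (Ne.symm hj) hiu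
  have hvonly : ∀ j, j ≠ iv → v ∉ vertSet (P j) := fun j hj => hv2 iv j (Ne.symm hj) hiv
  by_cases hiuv : iu = iv
  · -- both in the same single part: use a rainbow cycle through that part
    subst hiuv
    have hsel : ∃ j, j ≠ iu ∧ (pa ∉ P iu ∪ P j ∨ pb ∉ P iu ∪ P j) := by
      by_cases hk : iu = b0
      · subst hk
        exact ⟨c0, hc0b, Or.inl (hpanot iu c0 (Ne.symm hab) hc0a)⟩
      · rcases huniv iu with rfl | h | rfl
        · exact ⟨c0, hc0a, Or.inr (hpbnot iu c0 hab hc0b)⟩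
        · exact absurd h hk
        · exact ⟨a0, fun h => hc0a h.symm, Or.inr (hpbnot iu a0 hc0b hab)⟩
    obtain ⟨j, hj, hcond⟩ := hsel
    exact caseA iu j (Ne.symm hj) (Or.inl hiu) (Or.inl hiv) hcond
  · -- u, v in different single parts
    have hsplit3 : ∀ a b x y : Fin 3, a ≠ b → x ≠ y →
        (x = a ∧ y = b) ∨ (x = b ∧ y = a) ∨ (x ≠ a ∧ y ≠ a) ∨ (x ≠ b ∧ y ≠ b) := by decide
    rcases hsplit3 a0 b0 iu iv hab hiuv with ⟨rfl, rfl⟩ | ⟨rfl, rfl⟩ | ⟨h1, h2⟩ | ⟨h1, h2⟩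
    · -- the genuinely hard core case: u in P a0 only, v in P b0 only
      exact bad_core (hPsub iu) (hPsub iv) (hPsub c0) hS hrb hpa hpb (hPaths iu).1
        (hPaths iv).1 (hPaths c0).1 hst
        (subset_of_eq (hVij iu iv hab))
        (subset_of_eq (hVij iu c0 (Ne.symm hc0a)))
        (subset_of_eq (hVij iv c0 (Ne.symm hc0b)))
        (hPd iu iv hab) (hPd iu c0 (Ne.symm hc0a)) (hPd iv c0 (Ne.symm hc0b))
        (by rw [← hcardU iu c0 (Ne.symm hc0a)]
            exact hZodd iu c0 (Ne.symm hc0a) (Or.inr (hpbnot iu c0 hab hc0b)))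
        (by rw [← hcardU iv c0 (Ne.symm hc0b)]
            exact hZodd iv c0 (Ne.symm hc0b) (Or.inl (hpanot iv c0 (Ne.symm hab) hc0a)))
        hiu (huonly iv (Ne.symm hiuv)) hiv (hvonly iu hiuv) ε
    · -- swapped core case
      exact bad_core (hPsub iu) (hPsub iv) (hPsub c0) hS
        (fun S hSsub hcond => hrb S hSsub hcond.symm) hpb hpa (hPaths iu).1
        (hPaths iv).1 (hPaths c0).1 hst
        (subset_of_eq (hVij iu iv (Ne.symm hab)))
        (subset_of_eq (hVij iu c0 (Ne.symm hc0b)))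
        (subset_of_eq (hVij iv c0 (Ne.symm hc0a)))
        (hPd iu iv (Ne.symm hab)) (hPd iu c0 (Ne.symm hc0b)) (hPd iv c0 (Ne.symm hc0a))
        (by rw [← hcardU iu c0 (Ne.symm hc0b)]
            exact hZodd iu c0 (Ne.symm hc0b) (Or.inl (hpanot iu c0 (Ne.symm hab) hc0a)))
        (by rw [← hcardU iv c0 (Ne.symm hc0a)]
            exact hZodd iv c0 (Ne.symm hc0a) (Or.inr (hpbnot iv c0 hab hc0b)))
        hiu (huonly iv (Ne.symm hiuv)) hiv (hvonly iu hiuv) ε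
    · exact caseA iu iv hiuv (Or.inl hiu) (Or.inr hiv) (Or.inl (hpanot iu iv h1 h2))
    · exact caseA iu iv hiuv (Or.inl hiu) (Or.inr hiv) (Or.inr (hpbnot iu iv h1 h2))

end BadConnector

section Chains
set_option linter.unusedSectionVars false
set_option maxHeartbeats 1000000

open SimpleGraph Walk

variable {V K : Type*} [DecidableEq V] [DecidableEq K]

lemma aux_adj_inl_inr {m : ℕ} {parts : Fin m → Finset (Sym2 V × K)} {i : Fin m} {x : V} :
    (auxGraph parts).Adj (Sum.inl i) (Sum.inr x) ↔
      x ∈ vertSet (parts i) ∧ ∃ j, j ≠ i ∧ x ∈ vertSet (parts j) := by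
  rw [auxGraph, SimpleGraph.fromRel_adj]
  constructor
  · rintro ⟨-, h | h⟩
    · exact h
    · exact h.elim
  · intro h
    exact ⟨by simp, Or.inl h⟩

lemma aux_adj_cases {m : ℕ} {parts : Fin m → Finset (Sym2 V × K)} {a b : Fin m ⊕ V}
    (h : (auxGraph parts).Adj a b) :
    (∃ i x, a = Sum.inl i ∧ b = Sum.inr x) ∨ (∃ x i, a = Sum.inr x ∧ b = Sum.inl i) := by
  rw [auxGraph, SimpleGraph.fromRel_adj] at h
  rcases a with i | x <;> rcases b with j | y
  · rcases h.2 with h' | h' <;> exact h'.elim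
  · exact Or.inl ⟨i, y, rfl, rfl⟩
  · exact Or.inr ⟨x, j, rfl, rfl⟩
  · rcases h.2 with h' | h' <;> exact h'.elim

inductive AuxTrail {m : ℕ} (parts : Fin m → Finset (Sym2 V × K)) :
    Fin m → Fin m → List (V × Fin m) → Prop
  | nil (i : Fin m) : AuxTrail parts i i []
  | cons {i j i0 : Fin m} {x : V} {L : List (V × Fin m)}
      (hx : x ∈ vertSet (parts i)) (hx' : x ∈ vertSet (parts j))
      (h : AuxTrail parts j i0 L) : AuxTrail parts i i0 ((x, j) :: L)

lemma parse_walk {m : ℕ} {parts : Fin m → Finset (Sym2 V × K)} :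
    ∀ (n : ℕ) (i i0 : Fin m) (W : (auxGraph parts).Walk (Sum.inl i) (Sum.inl i0)),
      W.length = n →
      ∃ L, AuxTrail parts i i0 L ∧
        W.support = Sum.inl i :: (L.flatMap fun p => [Sum.inr p.1, Sum.inl p.2]) := by
  intro n
  induction n using Nat.strong_induction_on with
  | _ n ih =>
    intro i i0 W hlen
    cases W with
    | nil => exact ⟨[], AuxTrail.nil i, by simp⟩
    | @cons _ b _ h W' =>
      rcases aux_adj_cases h with ⟨i', x, hi, hb⟩ | ⟨x, i', hi, hb⟩
      swap
      · exact absurd hi (by simp)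
      · subst hb
        cases W' with
        | @cons _ c _ h' W'' =>
          rcases aux_adj_cases h' with ⟨i'', y, hy, hc⟩ | ⟨y, j, hy, hc⟩
          · exact absurd hy (by simp)
          · subst hc
            have hlt : W''.length < n := by
              rw [← hlen]
              simp only [Walk.length_cons]
              omega
            obtain ⟨L, htr, hsupp⟩ := ih W''.length hlt j i0 W'' rfl
            have hx1 : x ∈ vertSet (parts i) := (aux_adj_inl_inr.mp h).1
            have hx2 : x ∈ vertSet (parts j) := (aux_adj_inl_inr.mp h'.symm).1
            refine ⟨(x, j) :: L, AuxTrail.cons hx1 hx2 htr, ?_⟩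
            simp only [Walk.support_cons, hsupp, List.flatMap_cons]
            rfl

lemma flatMap_pairs_length {m : ℕ} (L : List (V × Fin m)) :
    (L.flatMap fun p => ([Sum.inr p.1, Sum.inl p.2] : List (Fin m ⊕ V))).length
      = 2 * L.length := by
  induction L with
  | nil => simp
  | cons a L ih =>
    simp only [List.flatMap_cons, List.length_append, List.length_cons, ih]
    simp
    omega

lemma auxTrail_facts {m : ℕ} {parts : Fin m → Finset (Sym2 V × K)} {i i0 : Fin m}
    {L : List (V × Fin m)} (h : AuxTrail parts i i0 L) (d : V × Fin m) :
    (∀ r, r < L.length →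
      (L.getD r d).1 ∈ vertSet (parts (if r = 0 then i else (L.getD (r - 1) d).2)) ∧
      (L.getD r d).1 ∈ vertSet (parts (L.getD r d).2)) ∧
    (∀ hne : L ≠ [], (L.getLast hne).2 = i0) := by
  induction h with
  | nil i => exact ⟨fun r hr => absurd hr (by simp), fun hne => absurd rfl hne⟩
  | @cons i j i0 x L hx hx' htail ih =>
    constructor
    · intro r hr
      cases r with
      | zero =>
        simp only [List.getD_cons_zero, if_pos rfl]
        exact ⟨hx, hx'⟩
      | succ rr =>
        have hlen : rr < L.length := by
          simp only [List.length_cons] at hr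
          omega
        have hih := ih.1 rr hlen
        simp only [List.getD_cons_succ, Nat.succ_ne_zero, if_false, Nat.succ_sub_one]
        cases rr with
        | zero =>
          simp only [List.getD_cons_zero]
          simpa using hih
        | succ ss =>
          simp only [List.getD_cons_succ]
          simpa using hih
    · intro hne
      by_cases hL : L = []
      · subst hL
        simp only [List.getLast_singleton]
        cases htail
        rfl
      · rw [List.getLast_cons hL]
        exact ih.2 hL

def PartChain {m : ℕ} (parts : Fin m → Finset (Sym2 V × K)) (k : ℕ)
    (I : ℕ → Fin m) (Vv : ℕ → V) : Prop :=
  2 ≤ k ∧ Set.InjOn I (Set.Iio k) ∧ Set.InjOn Vv (Set.Iio k) ∧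
  ∀ t, t < k → Vv t ∈ vertSet (parts (I t)) ∧ Vv t ∈ vertSet (parts (I ((t + 1) % k)))

lemma cycle_to_chain {m : ℕ} {parts : Fin m → Finset (Sym2 V × K)} {a : Fin m ⊕ V}
    {W : (auxGraph parts).Walk a a} (hW : W.IsCycle) :
    ∃ k I Vv, PartChain parts k I Vv := by
  classical
  obtain ⟨i, W0, hW0⟩ : ∃ (i : Fin m) (W0 : (auxGraph parts).Walk (Sum.inl i) (Sum.inl i)),
      W0.IsCycle := by
    rcases a with i | x
    · exact ⟨i, W, hW⟩
    · obtain ⟨b, h, W', rfl⟩ := Walk.not_nil_iff.mp hW.not_nil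
      rcases aux_adj_cases h with ⟨i', y, hi, hb⟩ | ⟨y, j, hy, hb⟩
      · exact absurd hi (by simp)
      · subst hb
        have hmem : (Sum.inl j : Fin m ⊕ V) ∈ (Walk.cons h W').support := by
          rw [Walk.support_cons]
          exact List.mem_cons_of_mem _ W'.start_mem_support
        exact ⟨j, (Walk.cons h W').rotate _ hmem, hW.rotate hmem⟩
  obtain ⟨L, htrail, hsupp⟩ := parse_walk W0.length i i W0 rfl
  have hlen3 := hW0.three_le_length
  have hsuplen : W0.support.length = W0.length + 1 := W0.length_support
  have hLlen : 2 * L.length = W0.length := by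
    have hcl := congrArg List.length hsupp
    rw [hsuplen, List.length_cons, flatMap_pairs_length] at hcl
    omega
  have hk2 : 2 ≤ L.length := by omega
  have hne : L ≠ [] := by
    intro h
    rw [h] at hk2
    simp at hk2
  set k := L.length with hkdef
  set d : V × Fin m := L.head hne with hddef
  have htailsupp : W0.support.tail = L.flatMap fun p => [Sum.inr p.1, Sum.inl p.2] := by
    rw [hsupp]
    rfl
  have hnd : (L.flatMap fun p => ([Sum.inr p.1, Sum.inl p.2] : List (Fin m ⊕ V))).Nodup :=
    htailsupp ▸ hW0.support_nodup
  obtain ⟨-, hpw⟩ := List.nodup_flatMap.mp hnd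
  have hpw2 : L.Pairwise (fun p q => p.1 ≠ q.1 ∧ p.2 ≠ q.2) := by
    refine hpw.imp ?_
    intro p q hdisj
    constructor
    · intro hfst
      exact (hdisj (a := Sum.inr p.1) (by simp)) (by simp [hfst])
    · intro hsnd
      exact (hdisj (a := Sum.inl p.2) (by simp)) (by simp [hsnd])
  have hget : ∀ r s, r < k → s < k → r ≠ s →
      (L.getD r d).1 ≠ (L.getD s d).1 ∧ (L.getD r d).2 ≠ (L.getD s d).2 := by
    have hpair := List.pairwise_iff_get.mp hpw2
    intro r s hr hs hrs
    rcases Nat.lt_or_ge r s with hlt | hge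
    · have := hpair ⟨r, hr⟩ ⟨s, hs⟩ hlt
      rw [List.getD_eq_getElem _ _ hr, List.getD_eq_getElem _ _ hs]
      simpa using this
    · have hlt : s < r := by omega
      have := hpair ⟨s, hs⟩ ⟨r, hr⟩ hlt
      rw [List.getD_eq_getElem _ _ hr, List.getD_eq_getElem _ _ hs]
      simp only [List.get_eq_getElem] at this
      exact ⟨this.1.symm, this.2.symm⟩
  have hmodlt : ∀ t, t < k → (t + 1) % k < k := fun t ht => Nat.mod_lt _ (by omega)
  have hmodinj : ∀ x y, x < k → y < k → (x + 1) % k = (y + 1) % k → x = y := by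
    intro x y hx hy hxy
    have hfix : ∀ z, z < k → (z + 1) % k = if z + 1 = k then 0 else z + 1 := by
      intro z hz
      by_cases hzk : z + 1 = k
      · rw [hzk, Nat.mod_self, if_pos rfl]
      · rw [Nat.mod_eq_of_lt (by omega), if_neg hzk]
    rw [hfix x hx, hfix y hy] at hxy
    by_cases h1 : x + 1 = k <;> by_cases h2 : y + 1 = k <;>
      simp [h1, h2] at hxy <;> omega
  refine ⟨k, fun r => (L.getD r d).2, fun r => (L.getD ((r + 1) % k) d).1, hk2, ?_, ?_, ?_⟩
  · intro x hx y hy hxy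
    rw [Set.mem_Iio] at hx hy
    by_contra hne'
    exact (hget x y hx hy hne').2 hxy
  · intro x hx y hy hxy
    rw [Set.mem_Iio] at hx hy
    by_contra hne'
    have h1 := hmodlt x hx
    have h2 := hmodlt y hy
    have hne2 : (x + 1) % k ≠ (y + 1) % k := fun h => hne' (hmodinj x y hx hy h)
    exact (hget _ _ h1 h2 hne2).1 hxy
  · intro t ht
    have hfacts := auxTrail_facts htrail d
    have hrt : (t + 1) % k < k := hmodlt t ht
    obtain ⟨hmem1, hmem2⟩ := hfacts.1 ((t + 1) % k) hrt
    refine ⟨?_, hmem2⟩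
    show (L.getD ((t + 1) % k) d).1 ∈ vertSet (parts ((L.getD t d).2))
    by_cases h0 : (t + 1) % k = 0
    · have htk : t + 1 = k := by
        rcases Nat.lt_or_ge (t + 1) k with h | h
        · rw [Nat.mod_eq_of_lt h] at h0
          omega
        · omega
      rw [if_pos h0] at hmem1
      have hlast : (L.getD t d).2 = i := by
        have ht' : t < L.length := ht
        rw [List.getD_eq_getElem _ _ ht']
        have : t = L.length - 1 := by omega
        subst this
        rw [← List.getLast_eq_getElem]
        exact hfacts.2 hne
      rw [hlast]
      exact hmem1
    · rw [if_neg h0] at hmem1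
      have ht1 : t + 1 < k := by
        rcases Nat.lt_or_ge (t + 1) k with h | h
        · exact h
        · have hk' : t + 1 = k := by omega
          rw [hk', Nat.mod_self] at h0
          exact absurd rfl h0
      rw [Nat.mod_eq_of_lt ht1] at hmem1
      rw [Nat.mod_eq_of_lt ht1]
      simpa using hmem1

end Chains

section Shorten
set_option linter.unusedSectionVars false
set_option maxHeartbeats 1000000

open SimpleGraph Walk

variable {V K : Type*} [DecidableEq V] [DecidableEq K]

lemma chain_shorten {m : ℕ} {parts : Fin m → Finset (Sym2 V × K)} {k : ℕ} {I : ℕ → Fin m}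
    {Vv : ℕ → V} (hc : PartChain parts k I Vv) {a b : ℕ} (hab : a < b) (hbk : b < k)
    (hnadj : b ≠ a + 1) (hwrap : ¬(a = 0 ∧ b = k - 1)) {w : V}
    (hwa : w ∈ vertSet (parts (I a))) (hwb : w ∈ vertSet (parts (I b))) :
    ∃ k' I' Vv', PartChain parts k' I' Vv' ∧ k' < k := by
  classical
  obtain ⟨hk2, hIinj, hVinj, hmem⟩ := hc
  have mkseg : ∀ (s e : ℕ) (w' : V), s < e → e < k →
      w' ∈ vertSet (parts (I e)) → w' ∈ vertSet (parts (I s)) →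
      (∀ r, s ≤ r → r < e → Vv r ≠ w') →
      PartChain parts (e - s + 1) (fun r => I (s + r))
        (fun r => if r = e - s then w' else Vv (s + r)) := by
    intro s e w' hse hek hw1 hw2 hvne
    refine ⟨by omega, ?_, ?_, ?_⟩
    · intro x hx y hy hxy
      rw [Set.mem_Iio] at hx hy
      have hx' : s + x < k := by omega
      have hy' : s + y < k := by omega
      have := hIinj (Set.mem_Iio.mpr hx') (Set.mem_Iio.mpr hy') hxy
      omega
    · intro x hx y hy hxy
      rw [Set.mem_Iio] at hx hy
      simp only at hxy
      by_cases hx0 : x = e - s <;> by_cases hy0 : y = e - s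
      · omega
      · rw [if_pos hx0, if_neg hy0] at hxy
        exact absurd hxy.symm (hvne (s + y) (by omega) (by omega))
      · rw [if_neg hx0, if_pos hy0] at hxy
        exact absurd hxy (hvne (s + x) (by omega) (by omega))
      · rw [if_neg hx0, if_neg hy0] at hxy
        have := hVinj (Set.mem_Iio.mpr (show s + x < k by omega))
          (Set.mem_Iio.mpr (show s + y < k by omega)) hxy
        omega
    · intro r hr
      show (if r = e - s then w' else Vv (s + r)) ∈ vertSet (parts (I (s + r))) ∧
        (if r = e - s then w' else Vv (s + r)) ∈
          vertSet (parts (I (s + ((r + 1) % (e - s + 1)))))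
      by_cases hre : r = e - s
      · subst hre
        rw [if_pos rfl]
        constructor
        · have hes : s + (e - s) = e := by omega
          rw [hes]
          exact hw1
        · rw [Nat.mod_self]
          exact hw2
      · have hlt : r < e - s := by omega
        rw [if_neg hre]
        have hr1 : r + 1 < e - s + 1 := by omega
        rw [Nat.mod_eq_of_lt hr1]
        have h1 := hmem (s + r) (by omega)
        refine ⟨h1.1, ?_⟩
        have h2 := h1.2
        rw [Nat.mod_eq_of_lt (show s + r + 1 < k by omega)] at h2
        exact h2
  by_cases hw : ∃ j, j < k ∧ Vv j = w
  · obtain ⟨j, hjk, hVj⟩ := hw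
    by_cases hja : j = a
    · subst hja
      refine ⟨b - (j + 1) + 1, _, _, mkseg (j + 1) b w (by omega) hbk hwb ?_ ?_, by omega⟩
      · have h1 := (hmem j (by omega)).2
        rw [Nat.mod_eq_of_lt (show j + 1 < k by omega)] at h1
        rw [← hVj]
        exact h1
      · intro r hr1 hr2 hrw
        have := hVinj (Set.mem_Iio.mpr (show r < k by omega))
          (Set.mem_Iio.mpr (show j < k by omega)) (hrw.trans hVj.symm)
        omega
    · by_cases hjr : a ≤ j ∧ j < b
      · have haj : a < j := by omega
        refine ⟨j - a + 1, _, _, mkseg a j w haj (by omega) ?_ hwa ?_, by omega⟩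
        · rw [← hVj]
          exact (hmem j (by omega)).1
        · intro r hr1 hr2 hrw
          have := hVinj (Set.mem_Iio.mpr (show r < k by omega))
            (Set.mem_Iio.mpr hjk) (hrw.trans hVj.symm)
          omega
      · refine ⟨b - a + 1, _, _, mkseg a b w hab hbk hwb hwa ?_, by omega⟩
        intro r hr1 hr2 hrw
        have := hVinj (Set.mem_Iio.mpr (show r < k by omega))
          (Set.mem_Iio.mpr hjk) (hrw.trans hVj.symm)
        omega
  · push_neg at hw
    refine ⟨b - a + 1, _, _, mkseg a b w hab hbk hwb hwa ?_, by omega⟩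
    intro r hr1 hr2
    exact hw r (by omega)

lemma chain_rotate {m : ℕ} {parts : Fin m → Finset (Sym2 V × K)} {k : ℕ} {I : ℕ → Fin m}
    {Vv : ℕ → V} (hc : PartChain parts k I Vv) (r : ℕ) :
    PartChain parts k (fun t => I ((t + r) % k)) (fun t => Vv ((t + r) % k)) := by
  obtain ⟨hk2, hIinj, hVinj, hmem⟩ := hc
  have hk0 : 0 < k := by omega
  have hshift_lt : ∀ t, (t + r) % k < k := fun t => Nat.mod_lt _ hk0
  have hshift_inj : ∀ x y, x < k → y < k → (x + r) % k = (y + r) % k → x = y := by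
    intro x y hx hy hxy
    have h1 : x ≡ y [MOD k] := Nat.ModEq.add_right_cancel' r hxy
    have h2 : x % k = y % k := h1
    rwa [Nat.mod_eq_of_lt hx, Nat.mod_eq_of_lt hy] at h2
  refine ⟨hk2, ?_, ?_, ?_⟩
  · intro x hx y hy hxy
    rw [Set.mem_Iio] at hx hy
    exact hshift_inj x y hx hy
      (hIinj (Set.mem_Iio.mpr (hshift_lt x)) (Set.mem_Iio.mpr (hshift_lt y)) hxy)
  · intro x hx y hy hxy
    rw [Set.mem_Iio] at hx hy
    exact hshift_inj x y hx hy
      (hVinj (Set.mem_Iio.mpr (hshift_lt x)) (Set.mem_Iio.mpr (hshift_lt y)) hxy)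
  · intro t ht
    have h1 := hmem ((t + r) % k) (hshift_lt t)
    refine ⟨h1.1, ?_⟩
    show Vv ((t + r) % k) ∈ vertSet (parts (I (((t + 1) % k + r) % k)))
    have heq : ((t + 1) % k + r) % k = ((t + r) % k + 1) % k := by
      rw [Nat.mod_add_mod, Nat.mod_add_mod]
      congr 1
      omega
    rw [heq]
    exact h1.2

end Shorten

section Main
set_option linter.unusedSectionVars false
set_option maxHeartbeats 2000000

open SimpleGraph Walk

variable {V K : Type*} [DecidableEq V] [DecidableEq K]

lemma no_chain {m : ℕ} {parts : Fin m → Finset (Sym2 V × K)}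
    (h : IsFrankensteinPartition parts) (k0 : ℕ) (I0 : ℕ → Fin m) (Vv0 : ℕ → V)
    (hc0 : PartChain parts k0 I0 Vv0) : False := by
  classical
  obtain ⟨h1, h2, h3, h4, h5⟩ := h
  have hps : ∀ i : Fin m, Simple (parts i) := by
    intro i
    rcases h3 i with hx | hx | hx
    exacts [hx.1, hx.1, hx.1]
  have hedgedisj : ∀ i j : Fin m, i ≠ j →
      ∀ e : Sym2 V, e ∈ uedges (parts i) → e ∈ uedges (parts j) → False := by
    intro i j hij e
    induction e using Sym2.ind with
    | _ x y =>
      intro he1 he2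
      obtain ⟨c, hc⟩ := id he1
      have hxy : x ≠ y := by
        intro hxy
        exact (hps i).1 _ hc (Sym2.mk_isDiag_iff.mpr hxy)
      have hx : x ∈ vertSet (parts i) ∩ vertSet (parts j) :=
        ⟨mem_vertSet_of_uedge he1 (Sym2.mem_mk_left _ _),
          mem_vertSet_of_uedge he2 (Sym2.mem_mk_left _ _)⟩
      have hy : y ∈ vertSet (parts i) ∩ vertSet (parts j) :=
        ⟨mem_vertSet_of_uedge he1 (Sym2.mem_mk_right _ _),
          mem_vertSet_of_uedge he2 (Sym2.mem_mk_right _ _)⟩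
      exact hxy (h1 i j hij hx hy)
  have hNoEven : ∀ i : Fin m, ¬ ContainsRainbowEvenCycle (parts i) := by
    intro i hcon
    obtain ⟨R, hR, hrest⟩ := hcon
    exact h5 ⟨R, hR.trans (Finset.subset_biUnion_of_mem parts (Finset.mem_univ i)), hrest⟩
  -- minimal chain
  have hex : ∃ k, ∃ I Vv, PartChain parts k I Vv := ⟨k0, I0, Vv0, hc0⟩
  obtain ⟨I1, Vv1, hc1⟩ := Nat.find_spec hex
  set k := Nat.find hex with hkdef
  have hmin : ∀ k', k' < k → ¬∃ I Vv, PartChain parts k' I Vv :=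
    fun k' hk' => Nat.find_min hex hk'
  have hk2 : 2 ≤ k := hc1.1
  have hk3 : 3 ≤ k := by
    rcases Nat.lt_or_ge k 3 with hlt | hge
    · exfalso
      have hkeq : k = 2 := by omega
      obtain ⟨-, hIinj, hVinj, hmem⟩ := hc1
      have hne01 : I1 0 ≠ I1 1 := by
        intro he
        have := hIinj (Set.mem_Iio.mpr (by omega)) (Set.mem_Iio.mpr (by omega)) he
        omega
      have hv0 := hmem 0 (by omega)
      have hv1 := hmem 1 (by omega)
      rw [hkeq] at hv0 hv1
      have hVne : Vv1 0 ≠ Vv1 1 := by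
        intro he
        have := hVinj (Set.mem_Iio.mpr (by omega)) (Set.mem_Iio.mpr (by omega)) he
        omega
      exact hVne (h1 (I1 0) (I1 1) hne01 ⟨hv0.1, by simpa using hv0.2⟩
        ⟨by simpa using hv1.2, hv1.1⟩)
    · exact hge
  -- rotate so that part 0 is not a tree
  have hvv0 := hc1.2.2.2 0 (by omega)
  have hne01 : I1 0 ≠ I1 (1 % k) := by
    intro he
    have := hc1.2.1 (Set.mem_Iio.mpr (by omega))
      (Set.mem_Iio.mpr (Nat.mod_lt _ (by omega))) he
    rw [Nat.mod_eq_of_lt (by omega)] at this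
    omega
  obtain ⟨r, hrk, hnt⟩ : ∃ r, r < k ∧ ¬ IsRainbowTree (parts (I1 r)) := by
    by_cases ht0 : IsRainbowTree (parts (I1 0))
    · refine ⟨1 % k, Nat.mod_lt _ (by omega), ?_⟩
      intro ht1
      have hdis := h4 (I1 0) (I1 (1 % k)) hne01 ht0 ht1
      have hmem2 : Vv1 0 ∈ vertSet (parts (I1 0)) ∩ vertSet (parts (I1 (1 % k))) :=
        ⟨hvv0.1, hvv0.2⟩
      rw [hdis] at hmem2
      exact hmem2
    · exact ⟨0, by omega, ht0⟩
  set I : ℕ → Fin m := fun t => I1 ((t + r) % k) with hIdef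
  set Vv : ℕ → V := fun t => Vv1 ((t + r) % k) with hVvdef
  have hc : PartChain parts k I Vv := chain_rotate hc1 r
  have hnt0 : ¬ IsRainbowTree (parts (I 0)) := by
    show ¬ IsRainbowTree (parts (I1 ((0 + r) % k)))
    rw [Nat.zero_add, Nat.mod_eq_of_lt hrk]
    exact hnt
  obtain ⟨-, hIinj, hVinj, hmem⟩ := hc
  have halpha : ∀ a b, a < b → b < k → b ≠ a + 1 → ¬(a = 0 ∧ b = k - 1) →
      ∀ x, x ∈ vertSet (parts (I a)) → x ∈ vertSet (parts (I b)) → False := by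
    intro a b hab hbk hnadj hwrap x hxa hxb
    obtain ⟨k', I', Vv', hc', hk'⟩ :=
      chain_shorten ⟨hk2, hIinj, hVinj, hmem⟩ hab hbk hnadj hwrap hxa hxb
    exact hmin k' hk' ⟨I', Vv', hc'⟩
  have hIne : ∀ a b, a < k → b < k → a ≠ b → I a ≠ I b := by
    intro a b ha hb hab he
    exact hab (hIinj (Set.mem_Iio.mpr ha) (Set.mem_Iio.mpr hb) he)
  have hVne : ∀ a b, a < k → b < k → a ≠ b → Vv a ≠ Vv b := by
    intro a b ha hb hab he
    exact hab (hVinj (Set.mem_Iio.mpr ha) (Set.mem_Iio.mpr hb) he)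
  have hbeta : ∀ t, t < k → ∀ x, x ∈ vertSet (parts (I t)) →
      x ∈ vertSet (parts (I ((t + 1) % k))) → x = Vv t := by
    intro t ht x hx1 hx2
    have htne : t ≠ (t + 1) % k := by
      by_cases hcase : t + 1 < k
      · rw [Nat.mod_eq_of_lt hcase]
        omega
      · have hteq : t + 1 = k := by omega
        rw [hteq, Nat.mod_self]
        omega
    have hsub := h1 (I t) (I ((t + 1) % k))
      (hIne t _ ht (Nat.mod_lt _ (by omega)) htne)
    have hvt := hmem t ht
    exact hsub ⟨hx1, hx2⟩ ⟨hvt.1, hvt.2⟩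
  -- connectors for parts 1..k-1
  have hconn : ∀ t, 1 ≤ t → t < k →
      ∃ Q, Q ⊆ parts (I t) ∧ IsPathSet Q (Vv (t - 1)) (Vv t) ∧ Rainbow Q := by
    intro t h1t htk
    have hx : Vv (t - 1) ∈ vertSet (parts (I t)) := by
      have hmm := (hmem (t - 1) (by omega)).2
      rw [show t - 1 + 1 = t by omega, Nat.mod_eq_of_lt htk] at hmm
      exact hmm
    have hy : Vv t ∈ vertSet (parts (I t)) := (hmem t htk).1
    have hxy : Vv (t - 1) ≠ Vv t := hVne _ _ (by omega) htk (by omega)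
    rcases h3 (I t) with hP | hP | hP
    · obtain ⟨Q, hQ1, hQ2, hQ3, -⟩ :=
        cycle_connector hP.1 hP.2.1 hP.2.2.1 hP.2.2.2.1 hx hy hxy 0
      exact ⟨Q, hQ1, hQ2, hQ3⟩
    · obtain ⟨Q, hQ1, hQ2, hQ3, -⟩ := bad_connector hP (hNoEven _) hx hy hxy 0
      exact ⟨Q, hQ1, hQ2, hQ3⟩
    · exact tree_connector hP hx hy
  have hconn' : ∀ t : ℕ, ∃ Q, 1 ≤ t → t < k →
      Q ⊆ parts (I t) ∧ IsPathSet Q (Vv (t - 1)) (Vv t) ∧ Rainbow Q := by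
    intro t
    by_cases hcond : 1 ≤ t ∧ t < k
    · obtain ⟨Q, hQ⟩ := hconn t hcond.1 hcond.2
      exact ⟨Q, fun _ _ => hQ⟩
    · exact ⟨∅, fun hh1 hh2 => absurd ⟨hh1, hh2⟩ hcond⟩
  choose Q hQ using hconn'
  set Snat : ℕ := ∑ t ∈ Finset.Ico 1 k, (Q t).card with hSnatdef
  -- connector for part 0 with parity correction
  have hx0 : Vv (k - 1) ∈ vertSet (parts (I 0)) := by
    have hmm := (hmem (k - 1) (by omega)).2
    rw [show k - 1 + 1 = k by omega, Nat.mod_self] at hmm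
    exact hmm
  have hy0 : Vv 0 ∈ vertSet (parts (I 0)) := (hmem 0 (by omega)).1
  have hxy0 : Vv (k - 1) ≠ Vv 0 := hVne _ _ (by omega) (by omega) (by omega)
  obtain ⟨Q0, hQ01, hQ02, hQ03, hQ0par⟩ : ∃ Q0, Q0 ⊆ parts (I 0) ∧
      IsPathSet Q0 (Vv (k - 1)) (Vv 0) ∧ Rainbow Q0 ∧
      ((Q0.card : ZMod 2)) = -(Snat : ZMod 2) := by
    rcases h3 (I 0) with hP | hP | hP
    · exact cycle_connector hP.1 hP.2.1 hP.2.2.1 hP.2.2.2.1 hx0 hy0 hxy0 (-(Snat : ZMod 2))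
    · exact bad_connector hP (hNoEven _) hx0 hy0 hxy0 (-(Snat : ZMod 2))
    · exact absurd hP hnt0
  -- build the long path through parts 1..k-1
  have hbuild : ∀ rr, 1 ≤ rr → rr < k →
      IsPathSet ((Finset.Ico 1 (rr + 1)).biUnion Q) (Vv 0) (Vv rr) ∧
      (∀ x ∈ vertSet ((Finset.Ico 1 (rr + 1)).biUnion Q),
        ∃ t, 1 ≤ t ∧ t ≤ rr ∧ x ∈ vertSet (parts (I t))) := by
    intro rr
    induction rr with
    | zero => intro hcon; exact absurd hcon (by omega)
    | succ n ihn =>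
      intro h1n hnk
      by_cases hn0 : n = 0
      · subst hn0
        have hico : Finset.Ico 1 2 = {1} := rfl
        rw [hico, Finset.singleton_biUnion]
        obtain ⟨hs1, hs2, hs3⟩ := hQ 1 (le_refl 1) hnk
        exact ⟨hs2, fun x hx => ⟨1, le_refl 1, le_refl 1, vertSet_mono hs1 hx⟩⟩
      · have hn1 : 1 ≤ n := by omega
        obtain ⟨ihp, ihv⟩ := ihn hn1 (by omega)
        obtain ⟨hs1, hs2, hs3⟩ := hQ (n + 1) (by omega) hnk
        have hicos : Finset.Ico 1 (n + 2) = insert (n + 1) (Finset.Ico 1 (n + 1)) :=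
          Nat.Ico_succ_right_eq_insert_Ico (by omega)
        rw [hicos, Finset.biUnion_insert, Finset.union_comm]
        have hint : vertSet ((Finset.Ico 1 (n + 1)).biUnion Q) ∩ vertSet (Q (n + 1))
            ⊆ {Vv n} := by
          rintro x ⟨hx1, hx2⟩
          obtain ⟨t, ht1, ht2, hxt⟩ := ihv x hx1
          have hxp : x ∈ vertSet (parts (I (n + 1))) := vertSet_mono hs1 hx2
          by_cases htn : t = n
          · subst htn
            exact hbeta t (by omega) x hxt (by rw [Nat.mod_eq_of_lt hnk]; exact hxp)
          · exfalso
            exact halpha t (n + 1) (by omega) hnk (by omega)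
              (by rintro ⟨rfl, -⟩; omega) x hxt hxp
        have happ := appendPathSets ihp hs2 (hVne 0 n (by omega) (by omega) (by omega))
          (hVne n (n + 1) (by omega) hnk (by omega)) hint
        refine ⟨happ, ?_⟩
        intro x hx
        rw [vertSet_union] at hx
        rcases hx with hx | hx
        · obtain ⟨t, ha, hb, hcx⟩ := ihv x hx
          exact ⟨t, ha, by omega, hcx⟩
        · exact ⟨n + 1, by omega, le_refl _, vertSet_mono hs1 hx⟩
  obtain ⟨hpath, hvset⟩ := hbuild (k - 1) (by omega) (by omega)
  rw [show k - 1 + 1 = k by omega] at hpath hvset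
  set Sset := (Finset.Ico 1 k).biUnion Q with hSdef
  have hintclose : vertSet Sset ∩ vertSet Q0 ⊆ {Vv 0, Vv (k - 1)} := by
    rintro x ⟨hx1, hx2⟩
    obtain ⟨t, ht1, ht2, hxt⟩ := hvset x hx1
    have hxp : x ∈ vertSet (parts (I 0)) := vertSet_mono hQ01 hx2
    by_cases h1t : t = 1
    · subst h1t
      left
      have := hbeta 0 (by omega) x hxp (by rw [Nat.mod_eq_of_lt (show (1:ℕ) < k by omega)]; exact hxt)
      exact this
    · by_cases hkt : t = k - 1
      · subst hkt
        right
        have := hbeta (k - 1) (by omega) x hxt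
          (by rw [show k - 1 + 1 = k by omega, Nat.mod_self]; exact hxp)
        exact this
      · exfalso
        exact halpha 0 t (by omega) (by omega) (by omega)
          (by rintro ⟨-, h'⟩; exact hkt h') x hxp hxt
  have hueS : ∀ e, e ∈ uedges Sset → ∃ t, 1 ≤ t ∧ t < k ∧ e ∈ uedges (parts (I t)) := by
    rintro e ⟨c, hc⟩
    obtain ⟨t, htmem, hct⟩ := Finset.mem_biUnion.mp hc
    rw [Finset.mem_Ico] at htmem
    exact ⟨t, htmem.1, htmem.2, ⟨c, (hQ t htmem.1 htmem.2).1 hct⟩⟩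
  have hedisj : ∀ e, e ∈ uedges Sset → e ∈ uedges Q0 → False := by
    intro e he1 he2
    obtain ⟨t, ht1, ht2, hept⟩ := hueS e he1
    exact hedgedisj (I t) (I 0) (hIne t 0 ht2 (by omega) (by omega)) e hept
      (uedges_mono hQ01 he2)
  have hcyc : IsCycleSet (Sset ∪ Q0) :=
    pathsToCycleSet hpath hQ02.symm (hVne 0 (k - 1) (by omega) (by omega) (by omega))
      hintclose hedisj
  -- locate elements
  have hlocS : ∀ p : Sym2 V × K, p ∈ Sset ∪ Q0 →
      ∃ t, t < k ∧ p ∈ (if t = 0 then Q0 else Q t) := by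
    intro p hp
    rcases Finset.mem_union.mp hp with hp | hp
    · obtain ⟨t, htmem, hpt⟩ := Finset.mem_biUnion.mp hp
      rw [Finset.mem_Ico] at htmem
      refine ⟨t, htmem.2, ?_⟩
      rw [if_neg (by omega)]
      exact hpt
    · exact ⟨0, by omega, by rw [if_pos rfl]; exact hp⟩
  have hQFsub : ∀ t, t < k → (if t = 0 then Q0 else Q t) ⊆ parts (I t) := by
    intro t ht
    by_cases h0 : t = 0
    · subst h0; rw [if_pos rfl]; exact hQ01
    · rw [if_neg h0]; exact (hQ t (by omega) ht).1
  have hQFrb : ∀ t, t < k → Rainbow (if t = 0 then Q0 else Q t) := by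
    intro t ht
    by_cases h0 : t = 0
    · subst h0; rw [if_pos rfl]; exact hQ03
    · rw [if_neg h0]; exact (hQ t (by omega) ht).2.2
  have hSimpleR : Simple (Sset ∪ Q0) := by
    constructor
    · intro p hp
      obtain ⟨t, ht, hpt⟩ := hlocS p hp
      exact (hps (I t)).1 p (hQFsub t ht hpt)
    · intro p hp q hq hpq
      obtain ⟨t, ht, hpt⟩ := hlocS p hp
      obtain ⟨t', ht', hqt⟩ := hlocS q hq
      by_cases hI : I t = I t'
      · exact (hps (I t)).2 p (hQFsub t ht hpt) q (by rw [hI]; exact hQFsub t' ht' hqt) hpq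
      · exact absurd hpq (by
          intro hpq'
          exact hedgedisj _ _ hI p.1 ⟨p.2, hQFsub t ht hpt⟩
            ⟨q.2, by rw [hpq']; exact hQFsub t' ht' hqt⟩)
  have hRainbowR : Rainbow (Sset ∪ Q0) := by
    intro p hp q hq hpq
    obtain ⟨t, ht, hpt⟩ := hlocS p hp
    obtain ⟨t', ht', hqt⟩ := hlocS q hq
    by_cases hI : t = t'
    · subst hI
      exact hQFrb t ht p hpt q hqt hpq
    · exfalso
      have hcol1 : p.2 ∈ colorSet (parts (I t)) := mem_colorSet (hQFsub t ht hpt)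
      have hcol2 : p.2 ∈ colorSet (parts (I t')) := by
        rw [hpq]
        exact mem_colorSet (hQFsub t' ht' hqt)
      exact Set.disjoint_left.mp (h2 (I t) (I t') (hIne t t' ht ht' hI)) hcol1 hcol2
  -- cardinality: even
  have hdisjQ : Disjoint Sset Q0 := Finset.disjoint_left.mpr (by
    intro p hp hp0
    obtain ⟨t, htmem, hpt⟩ := Finset.mem_biUnion.mp hp
    rw [Finset.mem_Ico] at htmem
    exact hedgedisj (I t) (I 0) (hIne t 0 htmem.2 (by omega) (by omega)) p.1
      ⟨p.2, (hQ t htmem.1 htmem.2).1 hpt⟩ ⟨p.2, hQ01 hp0⟩)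
  have hScard : Sset.card = Snat := by
    rw [hSdef, hSnatdef]
    refine Finset.card_biUnion ?_
    intro x hx y hy hxy
    rw [Finset.mem_coe, Finset.mem_Ico] at hx hy
    exact Finset.disjoint_left.mpr (fun p hp1 hp2 =>
      (hedgedisj (I x) (I y) (hIne x y hx.2 hy.2 hxy) p.1
        ⟨p.2, (hQ x hx.1 hx.2).1 hp1⟩ ⟨p.2, (hQ y hy.1 hy.2).1 hp2⟩).elim)
  have heven : Even ((Sset ∪ Q0).card) := by
    have hcast : (((Sset ∪ Q0).card : ℕ) : ZMod 2) = 0 := by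
      rw [Finset.card_union_of_disjoint hdisjQ, hScard]
      push_cast
      rw [hQ0par]
      ring
    have hdvd := (ZMod.natCast_eq_zero_iff _ 2).mp hcast
    obtain ⟨c, hc⟩ := hdvd
    exact ⟨c, by omega⟩
  have hsubG : Sset ∪ Q0 ⊆ Finset.univ.biUnion parts := by
    intro p hp
    obtain ⟨t, ht, hpt⟩ := hlocS p hp
    exact Finset.mem_biUnion.mpr ⟨I t, Finset.mem_univ _, hQFsub t ht hpt⟩
  exact h5 ⟨Sset ∪ Q0, hsubG, hSimpleR, hRainbowR, hcyc, heven⟩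

end Main

/-- For a Frankenstein graph with partition `parts`, the auxiliary
bipartite incidence graph is acyclic (a forest). -/
theorem frankenstein_auxGraph_isAcyclic {m : ℕ}
    (parts : Fin m → Finset (Sym2 V × K))
    (h : IsFrankensteinPartition parts) :
    (auxGraph parts).IsAcyclic := by
  intro v W hW
  obtain ⟨k, I, Vv, hc⟩ := cycle_to_chain hW
  exact no_chain h k I Vv hc
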